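/- There is a polynomial p such that the following holds. For all sequential vset-automata A1 and A2 that are both semi-functional for X := Vars(A1) ∩ Vars(A2), there exists a sequential vset-automaton A that is semi-functional for X, satisfies ⟦A⟧(d) = ⟦A1 ⋈ A2⟧(d) for every document d, and whose total size (number of states plus number of transitions) is at most p(size of A1 + size of A2). -/

import Mathlib

namespace Spanners

open scoped Classical

/-! ### Spans and mappings -/

abbrev Span := ℕ × ℕ

abbrev VMapping := ℕ → Option Span

def emptyMapping : VMapping := fun _ => none

def mapDom (μ : VMapping) : Set ℕ := {x | μ x ≠ none}

/-- Two mappings are compatible if they agree on every common variable. -/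
def Compatible (μ1 μ2 : VMapping) : Prop :=
  ∀ x s1 s2, μ1 x = some s1 → μ2 x = some s2 → s1 = s2

def DisjointDom (μ1 μ2 : VMapping) : Prop :=
  ∀ x, μ1 x = none ∨ μ2 x = none

def munion (μ1 μ2 : VMapping) : VMapping := fun x =>
  match μ1 x with
  | some s => some s
  | none => μ2 x

def minsert (x : ℕ) (s : Span) (μ : VMapping) : VMapping :=
  fun y => if y = x then some s else μ y

/-- Natural join of two sets of mappings. -/
def joinSet (S1 S2 : Set VMapping) : Set VMapping :=
  {μ | ∃ μ1 ∈ S1, ∃ μ2 ∈ S2, Compatible μ1 μ2 ∧ μ = munion μ1 μ2}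

/-- Difference of two sets of mappings. -/
def diffSet (S1 S2 : Set VMapping) : Set VMapping :=
  {μ1 | μ1 ∈ S1 ∧ ∀ μ2 ∈ S2, ¬ Compatible μ1 μ2}

/-- Restriction of a mapping to a set of variables. -/
noncomputable def restrictMap (μ : VMapping) (V : Set ℕ) : VMapping :=
  fun x => if x ∈ V then μ x else none

/-- Projection of a set of mappings to a set of variables. -/
def projSet (V : Set ℕ) (S : Set VMapping) : Set VMapping :=
  {μ' | ∃ μ ∈ S, μ' = restrictMap μ V}

/-! ### Regex formulas -/

inductive RGX (Sig : Type) where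
  | empty : RGX Sig
  | eps : RGX Sig
  | letter : Sig → RGX Sig
  | union : RGX Sig → RGX Sig → RGX Sig
  | concat : RGX Sig → RGX Sig → RGX Sig
  | star : RGX Sig → RGX Sig
  | bind : ℕ → RGX Sig → RGX Sig

variable {Sig : Type}

def RGX.vars : RGX Sig → Finset ℕ
  | .empty => ∅
  | .eps => ∅
  | .letter _ => ∅
  | .union a b => a.vars ∪ b.vars
  | .concat a b => a.vars ∪ b.vars
  | .star a => a.vars
  | .bind x a => insert x a.vars

def RGX.size : RGX Sig → ℕ
  | .empty => 1
  | .eps => 1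
  | .letter _ => 1
  | .union a b => a.size + b.size + 1
  | .concat a b => a.size + b.size + 1
  | .star a => a.size + 1
  | .bind _ a => a.size + 1

/-- The schemaless semantics `⟨α⟩(d)`: `RMatch α d i j μ` means `([i,j⟩, μ) ∈ ⟨α⟩(d)`. -/
inductive RMatch : RGX Sig → List Sig → ℕ → ℕ → VMapping → Prop where
  | eps {d : List Sig} {i : ℕ} (h1 : 1 ≤ i) (h2 : i ≤ d.length + 1) :
      RMatch .eps d i i emptyMapping
  | letter {d : List Sig} {i : ℕ} {σ : Sig} (h1 : 1 ≤ i) (h2 : d[i - 1]? = some σ) :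
      RMatch (.letter σ) d i (i + 1) emptyMapping
  | unionL {a b : RGX Sig} {d : List Sig} {i j : ℕ} {μ : VMapping}
      (h : RMatch a d i j μ) : RMatch (.union a b) d i j μ
  | unionR {a b : RGX Sig} {d : List Sig} {i j : ℕ} {μ : VMapping}
      (h : RMatch b d i j μ) : RMatch (.union a b) d i j μ
  | concat {a b : RGX Sig} {d : List Sig} {i k j : ℕ} {μ1 μ2 : VMapping}
      (h1 : RMatch a d i k μ1) (h2 : RMatch b d k j μ2) (hd : DisjointDom μ1 μ2) :
      RMatch (.concat a b) d i j (munion μ1 μ2)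
  | bind {x : ℕ} {a : RGX Sig} {d : List Sig} {i j : ℕ} {μ : VMapping}
      (h : RMatch a d i j μ) (hx : μ x = none) :
      RMatch (.bind x a) d i j (minsert x (i, j) μ)
  | starNil {a : RGX Sig} {d : List Sig} {i : ℕ} (h1 : 1 ≤ i) (h2 : i ≤ d.length + 1) :
      RMatch (.star a) d i i emptyMapping
  | starCons {a : RGX Sig} {d : List Sig} {i k j : ℕ} {μ1 μ2 : VMapping}
      (h1 : RMatch a d i k μ1) (h2 : RMatch (.star a) d k j μ2) (hd : DisjointDom μ1 μ2) :
      RMatch (.star a) d i j (munion μ1 μ2)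

/-- `⟦α⟧(d)`: mappings extracted with the full span. -/
def rgxSem (α : RGX Sig) (d : List Sig) : Set VMapping :=
  {μ | RMatch α d 1 (d.length + 1) μ}

/-- Sequential regex formulas. -/
def RGX.Sequential : RGX Sig → Prop
  | .empty => True
  | .eps => True
  | .letter _ => True
  | .union a b => a.Sequential ∧ b.Sequential
  | .concat a b => a.Sequential ∧ b.Sequential ∧ Disjoint a.vars b.vars
  | .star a => a.Sequential ∧ a.vars = ∅
  | .bind x a => a.Sequential ∧ x ∉ a.vars

/-- Variable-free words over the alphabet (built from ε, letters and concatenation). -/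
inductive RGX.IsWord : RGX Sig → Prop where
  | eps : RGX.IsWord .eps
  | letter (σ : Sig) : RGX.IsWord (.letter σ)
  | concat {a b : RGX Sig} : a.IsWord → b.IsWord → RGX.IsWord (.concat a b)

/-- Functional for a set `V` of variables. -/
inductive FunctionalFor : RGX Sig → Finset ℕ → Prop where
  | word {α : RGX Sig} (h : α.IsWord) : FunctionalFor α ∅
  | union {a b : RGX Sig} {V : Finset ℕ} (ha : FunctionalFor a V) (hb : FunctionalFor b V) :
      FunctionalFor (.union a b) V
  | concat {a b : RGX Sig} {V : Finset ℕ} (V1 : Finset ℕ) (hsub : V1 ⊆ V)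
      (ha : FunctionalFor a V1) (hb : FunctionalFor b (V \ V1)) :
      FunctionalFor (.concat a b) V
  | star {a : RGX Sig} (h : FunctionalFor a ∅) : FunctionalFor (.star a) ∅
  | bind {x : ℕ} {a : RGX Sig} {V : Finset ℕ} (h : FunctionalFor a (V.erase x)) :
      FunctionalFor (.bind x a) V

def RGX.Functional (α : RGX Sig) : Prop := FunctionalFor α α.vars

/-- Disjunctive functional regex formulas: finite disjunctions of functional regex formulas. -/
inductive DisjFunctional : RGX Sig → Prop where
  | base {γ : RGX Sig} (h : γ.Functional) : DisjFunctional γ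
  | union {a b : RGX Sig} (ha : DisjFunctional a) (hb : DisjFunctional b) :
      DisjFunctional (.union a b)

/-- Number of disjuncts of a (disjunctive) regex formula. -/
def countDisjuncts : RGX Sig → ℕ
  | .union a b => countDisjuncts a + countDisjuncts b
  | _ => 1

/-- Disjunction-free regex formulas. -/
def RGX.DisjFree : RGX Sig → Prop
  | .union _ _ => False
  | .concat a b => a.DisjFree ∧ b.DisjFree
  | .star a => a.DisjFree
  | .bind _ a => a.DisjFree
  | _ => True

/-- `γ` is synchronized for `x`: no subformula `γ1 ∨ γ2` contains `x`. -/
def RGX.SyncFor : RGX Sig → ℕ → Prop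
  | .union a b, x => (x ∉ a.vars ∧ x ∉ b.vars) ∧ a.SyncFor x ∧ b.SyncFor x
  | .concat a b, x => a.SyncFor x ∧ b.SyncFor x
  | .star a, x => a.SyncFor x
  | .bind _ a, x => a.SyncFor x
  | _, _ => True

/-- Concatenation of a list of regex formulas. -/
def concatList : List (RGX Sig) → RGX Sig
  | [] => .eps
  | [α] => α
  | α :: rest => .concat α (concatList rest)

/-- Disjunction of a list of regex formulas. -/
def disjList : List (RGX Sig) → RGX Sig
  | [] => .empty
  | [α] => α
  | α :: rest => .union α (disjList rest)

/-! ### vset-automata -/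

inductive VLabel (Sig : Type) where
  | eps : VLabel Sig
  | letter : Sig → VLabel Sig
  | openv : ℕ → VLabel Sig
  | closev : ℕ → VLabel Sig
deriving DecidableEq

structure VA (Sig : Type) [DecidableEq Sig] where
  q0 : ℕ
  F : Finset ℕ
  δ : Finset (ℕ × VLabel Sig × ℕ)

variable [DecidableEq Sig]

/-- The states of a VA: the initial state and all states mentioned in `F` or in transitions. -/
def statesOf (A : VA Sig) : Finset ℕ :=
  insert A.q0 (A.F ∪ A.δ.image (fun t => t.1) ∪ A.δ.image (fun t => t.2.2))

def labelVars : VLabel Sig → Finset ℕ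
  | .openv x => {x}
  | .closev x => {x}
  | _ => ∅

/-- `Vars(A)`: the variables mentioned in the transitions of `A`. -/
def varsOf (A : VA Sig) : Finset ℕ := A.δ.biUnion (fun t => labelVars t.2.1)

/-- Total size of a VA: number of states plus number of transitions. -/
def vaSize (A : VA Sig) : ℕ := (statesOf A).card + A.δ.card

/-- `A.PathFrom p ls q`: a path (run segment) from `p` to `q` with label sequence `ls`. -/
inductive VA.PathFrom (A : VA Sig) : ℕ → List (VLabel Sig) → ℕ → Prop where
  | nil (q : ℕ) : VA.PathFrom A q [] q
  | cons {p q r : ℕ} {l : VLabel Sig} {ls : List (VLabel Sig)}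
      (h : (p, l, q) ∈ A.δ) (htail : VA.PathFrom A q ls r) : VA.PathFrom A p (l :: ls) r

/-- The word (document) read by a sequence of labels. -/
def readWord : List (VLabel Sig) → List Sig :=
  List.filterMap fun l => match l with
    | VLabel.letter σ => some σ
    | _ => none

def isLetterL : VLabel Sig → Bool
  | .letter _ => true
  | _ => false

/-- The current position in the document just before executing the `k`-th label. -/
def posAt (ls : List (VLabel Sig)) (k : ℕ) : ℕ := 1 + (ls.take k).countP isLetterL

/-- Validity of a run, given by its label sequence. -/
def ValidLabels (ls : List (VLabel Sig)) : Prop :=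
  ∀ x : ℕ,
    ls.count (VLabel.openv x) ≤ 1 ∧
    ls.count (VLabel.closev x) ≤ 1 ∧
    ((VLabel.openv x) ∈ ls ↔ (VLabel.closev x) ∈ ls) ∧
    ∀ i j : ℕ, ls[i]? = some (VLabel.openv x) → ls[j]? = some (VLabel.closev x) →
      posAt ls i ≤ posAt ls j

/-- The mapping `μ_ρ` extracted from a (valid accepting) run with label sequence `ls`. -/
def runMapping (ls : List (VLabel Sig)) : VMapping := fun x =>
  if (VLabel.openv x) ∈ ls then
    some (posAt ls (ls.idxOf (VLabel.openv x)), posAt ls (ls.idxOf (VLabel.closev x)))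
  else none

/-- `ls` is the label sequence of an accepting run of `A`. -/
def AcceptsWith (A : VA Sig) (ls : List (VLabel Sig)) : Prop :=
  ∃ qf, VA.PathFrom A A.q0 ls qf ∧ qf ∈ A.F

/-- `⟦A⟧(d)`. -/
def vaSem (A : VA Sig) (d : List Sig) : Set VMapping :=
  {μ | ∃ ls, AcceptsWith A ls ∧ readWord ls = d ∧ ValidLabels ls ∧ μ = runMapping ls}

/-- A VA is sequential if all of its accepting runs are valid. -/
def VA.Sequential (A : VA Sig) : Prop := ∀ ls, AcceptsWith A ls → ValidLabels ls

/-- A run from the initial state to `q` that is a prefix of an accepting run. -/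
def PrefixRun (A : VA Sig) (ls : List (VLabel Sig)) (q : ℕ) : Prop :=
  VA.PathFrom A A.q0 ls q ∧ ∃ ls' qf, VA.PathFrom A q ls' qf ∧ qf ∈ A.F

/-- `A` is semi-functional for the variable `x`: no state has extended configuration `d`. -/
def SemiFunctionalFor (A : VA Sig) (x : ℕ) : Prop :=
  ¬ ∃ q ls1 ls2, PrefixRun A ls1 q ∧ PrefixRun A ls2 q ∧
      (VLabel.closev x) ∈ ls1 ∧ (VLabel.openv x) ∉ ls2

def SemiFunctionalForSet (A : VA Sig) (X : Finset ℕ) : Prop :=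
  ∀ x ∈ X, SemiFunctionalFor A x

/-- Functional VA: sequential, and every accepting run opens and closes every variable. -/
def FunctionalVA (A : VA Sig) : Prop :=
  A.Sequential ∧ ∀ ls, AcceptsWith A ls → ∀ x ∈ varsOf A,
    (VLabel.openv x) ∈ ls ∧ (VLabel.closev x) ∈ ls

/-- `l` has a unique target state in `A`. -/
def UniqueTarget (A : VA Sig) (l : VLabel Sig) : Prop :=
  ∃ qt : ℕ, ∀ p q : ℕ, (p, l, q) ∈ A.δ → q = qt

/-- `A` is synchronized for the variable `x`. -/
def SyncForVA (A : VA Sig) (x : ℕ) : Prop :=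
  UniqueTarget A (VLabel.openv x) ∧ UniqueTarget A (VLabel.closev x) ∧
    ((∀ ls, AcceptsWith A ls → (VLabel.openv x) ∈ ls ∧ (VLabel.closev x) ∈ ls) ∨
     (∀ ls, AcceptsWith A ls → (VLabel.openv x) ∉ ls ∧ (VLabel.closev x) ∉ ls))

/-- `A` is the disjunctive functional VA with functional components `parts`. -/
def DisjFunctionalVAWith (A : VA Sig) (parts : List (VA Sig)) : Prop :=
  (∀ B ∈ parts, FunctionalVA B) ∧
  (parts.Pairwise fun B C => Disjoint (statesOf B) (statesOf C)) ∧
  (∀ B ∈ parts, A.q0 ∉ statesOf B) ∧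
  A.F = parts.foldr (fun B s => B.F ∪ s) (∅ : Finset ℕ) ∧
  A.δ = (parts.map (fun B => (A.q0, (VLabel.eps : VLabel Sig), B.q0))).toFinset
        ∪ parts.foldr (fun B s => B.δ ∪ s) (∅ : Finset (ℕ × VLabel Sig × ℕ))

def DisjFunctionalVA (A : VA Sig) : Prop := ∃ parts, DisjFunctionalVAWith A parts

/-! ### 3CNF formulas -/

/-- A 3CNF clause over `n` Boolean variables: a triple of literals; `(i, true)` is `xᵢ`,
`(i, false)` is `¬xᵢ`. -/
def Clause3 (n : ℕ) : Type := (Fin n × Bool) × (Fin n × Bool) × (Fin n × Bool)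

def litsOf {n : ℕ} (c : Clause3 n) : List (Fin n × Bool) := [c.1, c.2.1, c.2.2]

def clauseSat {n : ℕ} (τ : Fin n → Bool) (c : Clause3 n) : Prop :=
  ∃ l ∈ litsOf c, τ l.1 = l.2

def Sat3 {n m : ℕ} (φ : Fin m → Clause3 n) : Prop :=
  ∃ τ : Fin n → Bool, ∀ j, clauseSat τ (φ j)

end Spanners

namespace Spanners

variable {Sig : Type} [DecidableEq Sig]

open scoped Classical
set_option linter.unusedSectionVars false

/-! ### Basic path utilities -/

lemma pathFrom_append {A : VA Sig} {p q r : ℕ} {l1 l2 : List (VLabel Sig)}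
    (h1 : A.PathFrom p l1 q) (h2 : A.PathFrom q l2 r) : A.PathFrom p (l1 ++ l2) r := by
  induction h1 with
  | nil => simpa using h2
  | cons h htail ih => exact VA.PathFrom.cons h (ih h2)

lemma pathFrom_snoc {A : VA Sig} {p r : ℕ} {ls : List (VLabel Sig)} {l : VLabel Sig}
    (h : A.PathFrom p (ls ++ [l]) r) : ∃ q, A.PathFrom p ls q ∧ (q, l, r) ∈ A.δ := by
  induction ls generalizing p with
  | nil =>
    cases h with
    | cons h1 htail =>
      cases htail with
      | nil => exact ⟨p, VA.PathFrom.nil p, h1⟩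
  | cons a tl ih =>
    cases h with
    | cons h1 htail =>
      obtain ⟨q, hq, hmem⟩ := ih htail
      exact ⟨q, VA.PathFrom.cons h1 hq, hmem⟩

lemma pathFrom_mem_delta {A : VA Sig} {p r : ℕ} {ls : List (VLabel Sig)}
    (h : A.PathFrom p ls r) {l : VLabel Sig} (hl : l ∈ ls) :
    ∃ s t, (s, l, t) ∈ A.δ := by
  induction h with
  | nil => simp at hl
  | cons h1 htail ih =>
    rcases List.mem_cons.1 hl with rfl | hl'
    · exact ⟨_, _, h1⟩
    · exact ih hl'

lemma open_mem_vars {A : VA Sig} {s t x : ℕ} (h : (s, VLabel.openv x, t) ∈ A.δ) :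
    x ∈ varsOf A := by
  apply Finset.mem_biUnion.2 ⟨_, h, ?_⟩
  simp [labelVars]

lemma close_mem_vars {A : VA Sig} {s t x : ℕ} (h : (s, VLabel.closev x, t) ∈ A.δ) :
    x ∈ varsOf A := by
  apply Finset.mem_biUnion.2 ⟨_, h, ?_⟩
  simp [labelVars]

lemma pathFrom_open_vars {A : VA Sig} {p r x : ℕ} {ls : List (VLabel Sig)}
    (h : A.PathFrom p ls r) (hl : VLabel.openv x ∈ ls) : x ∈ varsOf A := by
  obtain ⟨s, t, hst⟩ := pathFrom_mem_delta h hl; exact open_mem_vars hst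

lemma pathFrom_close_vars {A : VA Sig} {p r x : ℕ} {ls : List (VLabel Sig)}
    (h : A.PathFrom p ls r) (hl : VLabel.closev x ∈ ls) : x ∈ varsOf A := by
  obtain ⟨s, t, hst⟩ := pathFrom_mem_delta h hl; exact close_mem_vars hst

lemma pathFrom_src_states {A : VA Sig} {p r : ℕ} {ls : List (VLabel Sig)}
    (h : A.PathFrom p ls r) (hr : r ∈ statesOf A) : p ∈ statesOf A := by
  induction h with
  | nil => exact hr
  | cons h1 htail ih =>
    exact Finset.mem_insert.2 (Or.inr (Finset.mem_union.2 (Or.inl (Finset.mem_union.2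
      (Or.inr (Finset.mem_image.2 ⟨_, h1, rfl⟩))))))

lemma tgt_states {A : VA Sig} {p l r} (h : (p, l, r) ∈ A.δ) : r ∈ statesOf A :=
  Finset.mem_insert.2 (Or.inr (Finset.mem_union.2 (Or.inr (Finset.mem_image.2 ⟨_, h, rfl⟩))))

lemma src_states {A : VA Sig} {p l r} (h : (p, l, r) ∈ A.δ) : p ∈ statesOf A :=
  Finset.mem_insert.2 (Or.inr (Finset.mem_union.2 (Or.inl (Finset.mem_union.2
    (Or.inr (Finset.mem_image.2 ⟨_, h, rfl⟩))))))

lemma F_states {A : VA Sig} {f} (h : f ∈ A.F) : f ∈ statesOf A :=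
  Finset.mem_insert.2 (Or.inr (Finset.mem_union.2 (Or.inl (Finset.mem_union.2 (Or.inl h)))))

/-! ### Positions of label occurrences -/

/-- number of letters in a label list -/
def nLet (ls : List (VLabel Sig)) : ℕ := ls.countP isLetterL

/-- position (1-based) of the first occurrence of label `o` in `ls` -/
def posOf (ls : List (VLabel Sig)) (o : VLabel Sig) : ℕ :=
  1 + nLet (ls.takeWhile (fun a => a ≠ o))

@[simp] lemma nLet_nil : nLet ([] : List (VLabel Sig)) = 0 := rfl

@[simp] lemma nLet_append (l1 l2 : List (VLabel Sig)) : nLet (l1 ++ l2) = nLet l1 + nLet l2 :=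
  List.countP_append

@[simp] lemma nLet_cons (a : VLabel Sig) (l : List (VLabel Sig)) :
    nLet (a :: l) = (if isLetterL a then 1 else 0) + nLet l := by
  simp only [nLet, List.countP_cons]
  by_cases h : isLetterL a <;> simp [h] <;> omega

lemma posOf_cons_self (o : VLabel Sig) (l : List (VLabel Sig)) : posOf (o :: l) o = 1 := by
  simp [posOf, List.takeWhile]

lemma posOf_cons_ne {o a : VLabel Sig} (l : List (VLabel Sig)) (h : a ≠ o) :
    posOf (a :: l) o = (if isLetterL a then 1 else 0) + posOf l o := by
  simp [posOf, List.takeWhile, h]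
  omega

lemma posOf_append_left {o : VLabel Sig} {l1 : List (VLabel Sig)} (l2 : List (VLabel Sig))
    (h : o ∈ l1) : posOf (l1 ++ l2) o = posOf l1 o := by
  induction l1 with
  | nil => simp at h
  | cons a tl ih =>
    by_cases ha : a = o
    · subst ha; simp [posOf_cons_self]
    · rcases List.mem_cons.1 h with h' | h'
      · exact absurd h'.symm ha
      · rw [List.cons_append, posOf_cons_ne _ ha, posOf_cons_ne _ ha, ih h']

lemma posOf_append_right {o : VLabel Sig} {l1 : List (VLabel Sig)} (l2 : List (VLabel Sig))
    (h : o ∉ l1) : posOf (l1 ++ l2) o = nLet l1 + posOf l2 o := by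
  induction l1 with
  | nil => simp
  | cons a tl ih =>
    have ha : a ≠ o := fun e => h (e ▸ List.mem_cons_self)
    rw [List.cons_append, posOf_cons_ne _ ha, nLet_cons, ih (fun hm => h (List.mem_cons.2 (Or.inr hm)))]
    omega

lemma posOf_not_mem {o : VLabel Sig} {l : List (VLabel Sig)} (h : o ∉ l) :
    posOf l o = 1 + nLet l := by
  induction l with
  | nil => simp [posOf]
  | cons a tl ih =>
    have ha : a ≠ o := fun e => h (e ▸ List.mem_cons_self)
    rw [posOf_cons_ne _ ha, ih (fun hm => h (List.mem_cons.2 (Or.inr hm))), nLet_cons]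
    omega

lemma posOf_le {o : VLabel Sig} {l : List (VLabel Sig)} : posOf l o ≤ 1 + nLet l := by
  induction l with
  | nil => simp [posOf]
  | cons a tl ih =>
    by_cases ha : a = o
    · subst ha; rw [posOf_cons_self]; omega
    · rw [posOf_cons_ne _ ha, nLet_cons]; split <;> omega

/-- `posAt` at the index of the (unique) occurrence equals `posOf`. -/
lemma posAt_eq_posOf {l : List (VLabel Sig)} {o : VLabel Sig} {i : ℕ}
    (hc : l.count o ≤ 1) (hi : l[i]? = some o) : posAt l i = posOf l o := by
  induction l generalizing i with
  | nil => simp at hi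
  | cons a tl ih =>
    cases i with
    | zero =>
      simp at hi; subst hi
      simp [posAt, posOf_cons_self]
    | succ n =>
      simp only [List.getElem?_cons_succ] at hi
      have hmem : o ∈ tl := by
        have := List.getElem?_eq_some_iff.1 hi
        obtain ⟨h1, h2⟩ := this
        exact h2 ▸ List.getElem_mem _
      have ha : a ≠ o := by
        intro e; subst e
        have : 1 ≤ tl.count a := List.count_pos_iff.2 hmem
        simp [List.count_cons_self] at hc
        omega
      have hc' : tl.count o ≤ 1 := by
        rw [List.count_cons] at hc
        omega
      have hh := ih hc' hi
      rw [posOf_cons_ne _ ha]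
      show 1 + ((a :: tl).take (n+1)).countP isLetterL = _
      rw [List.take_succ_cons, List.countP_cons]
      have : posAt tl n = 1 + (tl.take n).countP isLetterL := rfl
      rw [this] at hh
      by_cases hl : isLetterL a <;> simp [hl] <;> omega

lemma posAt_le_nLet {l : List (VLabel Sig)} (i : ℕ) : posAt l i ≤ 1 + nLet l := by
  show 1 + (l.take i).countP isLetterL ≤ 1 + nLet l
  have h2 : (l.take i).countP isLetterL ≤ l.countP isLetterL := by
    conv_rhs => rw [← List.take_append_drop i l]
    rw [List.countP_append]; omega
  simpa [nLet] using h2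
/-! ### ValidLabels helpers -/

lemma mem_of_getElem?' {α : Type*} {l : List α} {i : ℕ} {a : α} (h : l[i]? = some a) : a ∈ l := by
  obtain ⟨hlt, he⟩ := List.getElem?_eq_some_iff.1 h
  exact he ▸ List.getElem_mem _

lemma posAt_indexOf {l : List (VLabel Sig)} {o : VLabel Sig} (hc : l.count o ≤ 1) (h : o ∈ l) :
    posAt l (l.idxOf o) = posOf l o := by
  apply posAt_eq_posOf hc
  have hlt := List.idxOf_lt_length_iff.2 h
  rw [List.getElem?_eq_getElem hlt, List.getElem_idxOf]

/-- Assemble `ValidLabels` from per-variable facts. -/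
lemma validLabels_of {ls : List (VLabel Sig)}
    (h : ∀ x : ℕ, ls.count (VLabel.openv x) ≤ 1 ∧ ls.count (VLabel.closev x) ≤ 1 ∧
      ((VLabel.openv x) ∈ ls ↔ (VLabel.closev x) ∈ ls) ∧
      ((VLabel.openv x) ∈ ls → posOf ls (VLabel.openv x) ≤ posOf ls (VLabel.closev x))) :
    ValidLabels ls := by
  intro x
  obtain ⟨h1, h2, h3, h4⟩ := h x
  refine ⟨h1, h2, h3, fun i j hi hj => ?_⟩
  have hoi : (VLabel.openv x) ∈ ls := mem_of_getElem?' hi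
  have hoj : (VLabel.closev x) ∈ ls := mem_of_getElem?' hj
  rw [posAt_eq_posOf h1 hi, posAt_eq_posOf h2 hj]
  exact h4 hoi

lemma runMapping_eq_posOf {ls : List (VLabel Sig)}
    (hc : ∀ x : ℕ, ls.count (VLabel.openv x) ≤ 1 ∧ ls.count (VLabel.closev x) ≤ 1 ∧
      ((VLabel.openv x) ∈ ls ↔ (VLabel.closev x) ∈ ls)) (x : ℕ) :
    runMapping ls x = if (VLabel.openv x) ∈ ls then
      some (posOf ls (VLabel.openv x), posOf ls (VLabel.closev x)) else none := by
  obtain ⟨h1, h2, h3⟩ := hc x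
  unfold runMapping
  by_cases hm : (VLabel.openv x) ∈ ls
  · rw [if_pos hm, if_pos hm, posAt_indexOf h1 hm, posAt_indexOf h2 (h3.1 hm)]
  · rw [if_neg hm, if_neg hm]

lemma validLabels_count_open {ls : List (VLabel Sig)} (h : ValidLabels ls) (x : ℕ) :
    ls.count (VLabel.openv x) ≤ 1 := (h x).1
lemma validLabels_count_close {ls : List (VLabel Sig)} (h : ValidLabels ls) (x : ℕ) :
    ls.count (VLabel.closev x) ≤ 1 := (h x).2.1
lemma validLabels_iff_mem {ls : List (VLabel Sig)} (h : ValidLabels ls) (x : ℕ) :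
    (VLabel.openv x) ∈ ls ↔ (VLabel.closev x) ∈ ls := (h x).2.2.1

lemma validLabels_posOf {ls : List (VLabel Sig)} (h : ValidLabels ls) {x : ℕ}
    (hm : (VLabel.openv x) ∈ ls) : posOf ls (VLabel.openv x) ≤ posOf ls (VLabel.closev x) := by
  have hmc := (validLabels_iff_mem h x).1 hm
  have hi : ls[ls.idxOf (VLabel.openv x)]? = some (VLabel.openv x) := by
    rw [List.getElem?_eq_getElem (List.idxOf_lt_length_iff.2 hm), List.getElem_idxOf]
  have hj : ls[ls.idxOf (VLabel.closev x)]? = some (VLabel.closev x) := by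
    rw [List.getElem?_eq_getElem (List.idxOf_lt_length_iff.2 hmc), List.getElem_idxOf]
  have := (h x).2.2.2 _ _ hi hj
  rwa [posAt_indexOf (h x).1 hm, posAt_indexOf (h x).2.1 hmc] at this

/-- two occurrences of something with count ≤ 1 in different parts of an append: impossible -/
lemma count_le_one_not_both {α : Type*} [DecidableEq α] {l1 l2 : List α} {a : α}
    (h : (l1 ++ l2).count a ≤ 1) (h1 : a ∈ l1) (h2 : a ∈ l2) : False := by
  rw [List.count_append] at h
  have c1 : 1 ≤ l1.count a := List.count_pos_iff.2 h1
  have c2 : 1 ≤ l2.count a := List.count_pos_iff.2 h2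
  omega

/-! ### Status predicates and mix lemmas -/

/-- some prefix run to `q` opens `x` -/
def OpensAt (A : VA Sig) (q x : ℕ) : Prop :=
  ∃ ls, PrefixRun A ls q ∧ (VLabel.openv x) ∈ ls

/-- some prefix run to `q` closes `x` -/
def ClosesAt (A : VA Sig) (q x : ℕ) : Prop :=
  ∃ ls, PrefixRun A ls q ∧ (VLabel.closev x) ∈ ls

lemma prefixRun_of_suffix {A : VA Sig} {q ls w qf : ℕ → ℕ} : True := trivial

lemma opensAt_intro {A : VA Sig} {q x : ℕ} {ls : List (VLabel Sig)}
    (h : PrefixRun A ls q) (hm : (VLabel.openv x) ∈ ls) : OpensAt A q x := ⟨ls, h, hm⟩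

lemma closesAt_intro {A : VA Sig} {q x : ℕ} {ls : List (VLabel Sig)}
    (h : PrefixRun A ls q) (hm : (VLabel.closev x) ∈ ls) : ClosesAt A q x := ⟨ls, h, hm⟩

/-- Mix lemma: if the actual prefix run does not open `x`, then no prefix run does. -/
lemma not_opensAt {A : VA Sig} (hseq : A.Sequential) {x : ℕ} (hsf : SemiFunctionalFor A x)
    {q : ℕ} {P : List (VLabel Sig)} (hP : PrefixRun A P q)
    (hm : (VLabel.openv x) ∉ P) : ¬ OpensAt A q x := by
  rintro ⟨P', hP', hm'⟩
  obtain ⟨hpath, S, qf, hS, hqf⟩ := hP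
  obtain ⟨hpath', _⟩ := hP'
  have hacc' : AcceptsWith A (P' ++ S) := ⟨qf, pathFrom_append hpath' hS, hqf⟩
  have hval' : ValidLabels (P' ++ S) := hseq _ hacc'
  by_cases hxs : (VLabel.openv x) ∈ S
  · exact count_le_one_not_both (validLabels_count_open hval' x) hm' hxs
  · have hacc : AcceptsWith A (P ++ S) := ⟨qf, pathFrom_append hpath hS, hqf⟩
    have hval : ValidLabels (P ++ S) := hseq _ hacc
    have hno : (VLabel.openv x) ∉ P ++ S := by
      intro hmem; rcases List.mem_append.1 hmem with h | h; exact hm h; exact hxs h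
    have hnc : (VLabel.closev x) ∉ P ++ S := fun hmem =>
      hno ((validLabels_iff_mem hval x).2 hmem)
    have hcP' : (VLabel.closev x) ∈ P' := by
      have : (VLabel.closev x) ∈ P' ++ S := (validLabels_iff_mem hval' x).1
        (List.mem_append.2 (Or.inl hm'))
      rcases List.mem_append.1 this with h | h
      · exact h
      · exact absurd h (fun hh => hnc (List.mem_append.2 (Or.inr hh)))
    exact hsf ⟨q, P', P, ⟨hpath', S, qf, hS, hqf⟩, ⟨hpath, S, qf, hS, hqf⟩, hcP', hm⟩

/-- Mix lemma: if the actual prefix run does not close `x`, then no prefix run does. -/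
lemma not_closesAt {A : VA Sig} (hseq : A.Sequential) {x : ℕ} (hsf : SemiFunctionalFor A x)
    {q : ℕ} {P : List (VLabel Sig)} (hP : PrefixRun A P q)
    (hm : (VLabel.closev x) ∉ P) : ¬ ClosesAt A q x := by
  rintro ⟨P', hP', hm'⟩
  by_cases hox : (VLabel.openv x) ∈ P
  · obtain ⟨hpath, S, qf, hS, hqf⟩ := hP
    obtain ⟨hpath', _⟩ := hP'
    have hval : ValidLabels (P ++ S) := hseq _ ⟨qf, pathFrom_append hpath hS, hqf⟩
    have hval' : ValidLabels (P' ++ S) := hseq _ ⟨qf, pathFrom_append hpath' hS, hqf⟩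
    have hcs : (VLabel.closev x) ∈ S := by
      have : (VLabel.closev x) ∈ P ++ S := (validLabels_iff_mem hval x).1
        (List.mem_append.2 (Or.inl hox))
      rcases List.mem_append.1 this with h | h
      · exact absurd h hm
      · exact h
    exact count_le_one_not_both (validLabels_count_close hval' x) hm' hcs
  · exact hsf ⟨q, P', P, hP', hP, hm', hox⟩
/-! ### The join construction -/

def Xv (A1 A2 : VA Sig) : Finset ℕ := varsOf A1 ∩ varsOf A2

def enc (b : Bool) (q1 q2 a1 : ℕ) : ℕ :=
  Nat.pair (cond b 1 0) (Nat.pair q1 (Nat.pair q2 a1))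

lemma enc_inj {b b' : Bool} {q1 q2 a1 q1' q2' a1' : ℕ}
    (h : enc b q1 q2 a1 = enc b' q1' q2' a1') : b = b' ∧ q1 = q1' ∧ q2 = q2' ∧ a1 = a1' := by
  unfold enc at h
  rw [Nat.pair_eq_pair] at h
  obtain ⟨h1, h2⟩ := h
  rw [Nat.pair_eq_pair] at h2
  obtain ⟨h3, h4⟩ := h2
  rw [Nat.pair_eq_pair] at h4
  refine ⟨?_, h3, h4.1, h4.2⟩
  cases b <;> cases b' <;> simp_all

/-- comp1 non-letter move: gates for shared variables -/
def C1ok (A1 A2 : VA Sig) (l : VLabel Sig) (q2 : ℕ) : Prop :=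
  (∀ σ, l ≠ VLabel.letter σ) ∧
  (∀ x, l = VLabel.openv x → x ∈ Xv A1 A2 → ¬ OpensAt A2 q2 x) ∧
  (∀ x, l = VLabel.closev x → x ∈ Xv A1 A2 → ¬ ClosesAt A2 q2 x)

/-- comp2 emitting move -/
def C2ok (A1 A2 : VA Sig) (l : VLabel Sig) (q1 : ℕ) : Prop :=
  (∀ σ, l ≠ VLabel.letter σ) ∧
  (∀ x, l = VLabel.openv x → x ∈ Xv A1 A2 → ¬ OpensAt A1 q1 x) ∧
  (∀ x, l = VLabel.closev x → x ∈ Xv A1 A2 → ¬ ClosesAt A1 q1 x)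

/-- comp2 silent move -/
def C2s (A1 A2 : VA Sig) (l : VLabel Sig) (q1 a1 : ℕ) : Prop :=
  (∃ x, l = VLabel.openv x ∧ x ∈ Xv A1 A2 ∧ ¬ OpensAt A1 a1 x ∧ OpensAt A1 q1 x) ∨
  (∃ x, l = VLabel.closev x ∧ x ∈ Xv A1 A2 ∧ ¬ ClosesAt A1 a1 x ∧ ClosesAt A1 q1 x)

noncomputable def dSW (A1 A2 : VA Sig) : Finset (ℕ × VLabel Sig × ℕ) :=
  ((statesOf A1 ×ˢ statesOf A2) ×ˢ statesOf A1).image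
    (fun z => (enc false z.1.1 z.1.2 z.2, VLabel.eps, enc true z.1.1 z.1.2 z.2))

noncomputable def dC1 (A1 A2 : VA Sig) : Finset (ℕ × VLabel Sig × ℕ) :=
  ((A1.δ ×ˢ (statesOf A2 ×ˢ statesOf A1)).filter
      (fun z => C1ok A1 A2 z.1.2.1 z.2.1)).image
    (fun z => (enc false z.1.1 z.2.1 z.2.2, z.1.2.1, enc false z.1.2.2 z.2.1 z.2.2))

noncomputable def dC2 (A1 A2 : VA Sig) : Finset (ℕ × VLabel Sig × ℕ) :=
  ((A2.δ ×ˢ (statesOf A1 ×ˢ statesOf A1)).filter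
      (fun z => C2ok A1 A2 z.1.2.1 z.2.1)).image
    (fun z => (enc true z.2.1 z.1.1 z.2.2, z.1.2.1, enc true z.2.1 z.1.2.2 z.2.2))

noncomputable def dC2s (A1 A2 : VA Sig) : Finset (ℕ × VLabel Sig × ℕ) :=
  ((A2.δ ×ˢ (statesOf A1 ×ˢ statesOf A1)).filter
      (fun z => C2s A1 A2 z.1.2.1 z.2.1 z.2.2)).image
    (fun z => (enc true z.2.1 z.1.1 z.2.2, VLabel.eps, enc true z.2.1 z.1.2.2 z.2.2))

noncomputable def dLT (A1 A2 : VA Sig) : Finset (ℕ × VLabel Sig × ℕ) :=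
  (((A1.δ ×ˢ A2.δ).filter
      (fun z => ∃ σ, z.1.2.1 = VLabel.letter σ ∧ z.2.2.1 = VLabel.letter σ)) ×ˢ statesOf A1).image
    (fun z => (enc true z.1.1.1 z.1.2.1 z.2, z.1.1.2.1, enc false z.1.1.2.2 z.1.2.2.2 z.1.1.2.2))

noncomputable def joinVA (A1 A2 : VA Sig) : VA Sig where
  q0 := enc false A1.q0 A2.q0 A1.q0
  F := ((A1.F ×ˢ A2.F) ×ˢ statesOf A1).image (fun z => enc true z.1.1 z.1.2 z.2)
  δ := dSW A1 A2 ∪ dC1 A1 A2 ∪ dC2 A1 A2 ∪ dC2s A1 A2 ∪ dLT A1 A2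

/-- The canonical-run relation: `R A1 A2 b q1 q2 a1 ls ls1 ls2` says that from the product
configuration `(b, q1, q2, a1)` there is an accepting suffix run with product labels `ls`
whose component label suffixes are `ls1`, `ls2`. -/
inductive R (A1 A2 : VA Sig) :
    Bool → ℕ → ℕ → ℕ → List (VLabel Sig) → List (VLabel Sig) → List (VLabel Sig) → Prop
  | done {f1 f2 a1 : ℕ} (h1 : f1 ∈ A1.F) (h2 : f2 ∈ A2.F) (ha : a1 ∈ statesOf A1) :
      R A1 A2 true f1 f2 a1 [] [] []
  | sw {q1 q2 a1 : ℕ} {ls ls1 ls2 : List (VLabel Sig)}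
      (h : R A1 A2 true q1 q2 a1 ls ls1 ls2) :
      R A1 A2 false q1 q2 a1 (VLabel.eps :: ls) ls1 ls2
  | c1 {q1 p1 q2 a1 : ℕ} {l : VLabel Sig} {ls ls1 ls2 : List (VLabel Sig)}
      (ht : (q1, l, p1) ∈ A1.δ) (hok : C1ok A1 A2 l q2)
      (h : R A1 A2 false p1 q2 a1 ls ls1 ls2) :
      R A1 A2 false q1 q2 a1 (l :: ls) (l :: ls1) ls2
  | c2 {q1 q2 p2 a1 : ℕ} {l : VLabel Sig} {ls ls1 ls2 : List (VLabel Sig)}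
      (ht : (q2, l, p2) ∈ A2.δ) (hok : C2ok A1 A2 l q1)
      (h : R A1 A2 true q1 p2 a1 ls ls1 ls2) :
      R A1 A2 true q1 q2 a1 (l :: ls) ls1 (l :: ls2)
  | c2s {q1 q2 p2 a1 : ℕ} {l : VLabel Sig} {ls ls1 ls2 : List (VLabel Sig)}
      (ht : (q2, l, p2) ∈ A2.δ) (hok : C2s A1 A2 l q1 a1)
      (h : R A1 A2 true q1 p2 a1 ls ls1 ls2) :
      R A1 A2 true q1 q2 a1 (VLabel.eps :: ls) ls1 (l :: ls2)
  | lt {q1 p1 q2 p2 a1 : ℕ} {σ : Sig} {ls ls1 ls2 : List (VLabel Sig)}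
      (h1 : (q1, VLabel.letter σ, p1) ∈ A1.δ) (h2 : (q2, VLabel.letter σ, p2) ∈ A2.δ)
      (h : R A1 A2 false p1 p2 p1 ls ls1 ls2) :
      R A1 A2 true q1 q2 a1 (VLabel.letter σ :: ls) (VLabel.letter σ :: ls1)
        (VLabel.letter σ :: ls2)

/-- From `R`, build an accepting path of the product automaton. -/
lemma R_to_path {A1 A2 : VA Sig} {b : Bool} {q1 q2 a1 : ℕ}
    {ls ls1 ls2 : List (VLabel Sig)} (h : R A1 A2 b q1 q2 a1 ls ls1 ls2)
    (h1 : q1 ∈ statesOf A1) (h2 : q2 ∈ statesOf A2) (ha : a1 ∈ statesOf A1) :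
    ∃ qf, (joinVA A1 A2).PathFrom (enc b q1 q2 a1) ls qf ∧ qf ∈ (joinVA A1 A2).F := by
  induction h with
  | @done f1 f2 a1 hf1 hf2 ha' =>
    exact ⟨enc true f1 f2 a1, VA.PathFrom.nil _,
      Finset.mem_image.2 ⟨((f1, f2), a1), by simp [Finset.mem_product, hf1, hf2, ha'], rfl⟩⟩
  | @sw q1 q2 a1 ls ls1 ls2 h ih =>
    obtain ⟨qf, hp, hqf⟩ := ih h1 h2 ha
    refine ⟨qf, VA.PathFrom.cons ?_ hp, hqf⟩
    refine Finset.mem_union.2 (Or.inl (Finset.mem_union.2 (Or.inl (Finset.mem_union.2 (Or.inl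
      (Finset.mem_union.2 (Or.inl ?_)))))))
    exact Finset.mem_image.2 ⟨((q1, q2), a1), by simp [Finset.mem_product, h1, h2, ha], rfl⟩
  | @c1 q1 p1 q2 a1 l ls ls1 ls2 ht hok h ih =>
    obtain ⟨qf, hp, hqf⟩ := ih (tgt_states ht) h2 ha
    refine ⟨qf, VA.PathFrom.cons ?_ hp, hqf⟩
    refine Finset.mem_union.2 (Or.inl (Finset.mem_union.2 (Or.inl (Finset.mem_union.2 (Or.inl
      (Finset.mem_union.2 (Or.inr ?_)))))))
    exact Finset.mem_image.2 ⟨((q1, l, p1), (q2, a1)),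
      Finset.mem_filter.2 ⟨by simp [Finset.mem_product, ht, h2, ha], hok⟩, rfl⟩
  | @c2 q1 q2 p2 a1 l ls ls1 ls2 ht hok h ih =>
    obtain ⟨qf, hp, hqf⟩ := ih h1 (tgt_states ht) ha
    refine ⟨qf, VA.PathFrom.cons ?_ hp, hqf⟩
    refine Finset.mem_union.2 (Or.inl (Finset.mem_union.2 (Or.inl (Finset.mem_union.2
      (Or.inr ?_)))))
    exact Finset.mem_image.2 ⟨((q2, l, p2), (q1, a1)),
      Finset.mem_filter.2 ⟨by simp [Finset.mem_product, ht, h1, ha], hok⟩, rfl⟩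
  | @c2s q1 q2 p2 a1 l ls ls1 ls2 ht hok h ih =>
    obtain ⟨qf, hp, hqf⟩ := ih h1 (tgt_states ht) ha
    refine ⟨qf, VA.PathFrom.cons ?_ hp, hqf⟩
    refine Finset.mem_union.2 (Or.inl (Finset.mem_union.2 (Or.inr ?_)))
    exact Finset.mem_image.2 ⟨((q2, l, p2), (q1, a1)),
      Finset.mem_filter.2 ⟨by simp [Finset.mem_product, ht, h1, ha], hok⟩, rfl⟩
  | @lt q1 p1 q2 p2 a1 σ ls ls1 ls2 hta htb h ih =>
    obtain ⟨qf, hp, hqf⟩ := ih (tgt_states hta) (tgt_states htb) (tgt_states hta)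
    refine ⟨qf, VA.PathFrom.cons ?_ hp, hqf⟩
    refine Finset.mem_union.2 (Or.inr ?_)
    exact Finset.mem_image.2 ⟨(((q1, VLabel.letter σ, p1), (q2, VLabel.letter σ, p2)), a1),
      Finset.mem_product.2 ⟨Finset.mem_filter.2 ⟨Finset.mem_product.2 ⟨hta, htb⟩, ⟨σ, rfl, rfl⟩⟩, ha⟩,
      rfl⟩

/-- From an accepting path of the product automaton, recover `R`. -/
lemma path_to_R {A1 A2 : VA Sig} {s qf : ℕ} {ls : List (VLabel Sig)}
    (h : (joinVA A1 A2).PathFrom s ls qf) (hqf : qf ∈ (joinVA A1 A2).F) :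
    ∀ b q1 q2 a1, s = enc b q1 q2 a1 → ∃ ls1 ls2, R A1 A2 b q1 q2 a1 ls ls1 ls2 := by
  induction h with
  | nil q =>
    intro b q1 q2 a1 hs
    subst hs
    obtain ⟨z, hz, he⟩ := Finset.mem_image.1 hqf
    obtain ⟨hb, h1, h2, h3⟩ := enc_inj he.symm
    obtain ⟨hz1, hz2⟩ := Finset.mem_product.1 hz
    obtain ⟨hf1, hf2⟩ := Finset.mem_product.1 hz1
    subst hb; subst h1; subst h2; subst h3
    exact ⟨[], [], R.done hf1 hf2 hz2⟩
  | @cons p q r l lstail hmem htail ih =>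
    intro b q1 q2 a1 hs
    subst hs
    rcases Finset.mem_union.1 hmem with hm | hm
    · rcases Finset.mem_union.1 hm with hm | hm
      · rcases Finset.mem_union.1 hm with hm | hm
        · rcases Finset.mem_union.1 hm with hm | hm
          · -- dSW
            obtain ⟨z, hz, he⟩ := Finset.mem_image.1 hm
            rw [Prod.ext_iff] at he
            obtain ⟨he1, he2⟩ := he
            rw [Prod.ext_iff] at he2
            obtain ⟨he2, he3⟩ := he2
            dsimp only at he1 he2 he3
            obtain ⟨hb, h1, h2, h3⟩ := enc_inj he1
            subst hb h1 h2 h3 he2 he3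
            obtain ⟨ls1, ls2, hR⟩ := ih hqf true z.1.1 z.1.2 z.2 rfl
            exact ⟨ls1, ls2, R.sw hR⟩
          · -- dC1
            obtain ⟨z, hz, he⟩ := Finset.mem_image.1 hm
            obtain ⟨hzm, hzc⟩ := Finset.mem_filter.1 hz
            obtain ⟨hz1, hz2⟩ := Finset.mem_product.1 hzm
            rw [Prod.ext_iff] at he
            obtain ⟨he1, he2⟩ := he
            rw [Prod.ext_iff] at he2
            obtain ⟨he2, he3⟩ := he2
            dsimp only at he1 he2 he3
            obtain ⟨hb, h1, h2, h3⟩ := enc_inj he1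
            subst hb h1 h2 h3 he2 he3
            obtain ⟨ls1, ls2, hR⟩ := ih hqf false z.1.2.2 z.2.1 z.2.2 rfl
            exact ⟨z.1.2.1 :: ls1, ls2,
              R.c1 (show (z.1.1, z.1.2.1, z.1.2.2) ∈ A1.δ from hz1) hzc hR⟩
        · -- dC2
          obtain ⟨z, hz, he⟩ := Finset.mem_image.1 hm
          obtain ⟨hzm, hzc⟩ := Finset.mem_filter.1 hz
          obtain ⟨hz1, hz2⟩ := Finset.mem_product.1 hzm
          rw [Prod.ext_iff] at he
          obtain ⟨he1, he2⟩ := he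
          rw [Prod.ext_iff] at he2
          obtain ⟨he2, he3⟩ := he2
          dsimp only at he1 he2 he3
          obtain ⟨hb, h1, h2, h3⟩ := enc_inj he1
          subst hb h1 h2 h3 he2 he3
          obtain ⟨ls1, ls2, hR⟩ := ih hqf true z.2.1 z.1.2.2 z.2.2 rfl
          exact ⟨ls1, z.1.2.1 :: ls2,
            R.c2 (show (z.1.1, z.1.2.1, z.1.2.2) ∈ A2.δ from hz1) hzc hR⟩
      · -- dC2s
        obtain ⟨z, hz, he⟩ := Finset.mem_image.1 hm
        obtain ⟨hzm, hzc⟩ := Finset.mem_filter.1 hz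
        obtain ⟨hz1, hz2⟩ := Finset.mem_product.1 hzm
        rw [Prod.ext_iff] at he
        obtain ⟨he1, he2⟩ := he
        rw [Prod.ext_iff] at he2
        obtain ⟨he2, he3⟩ := he2
        dsimp only at he1 he2 he3
        obtain ⟨hb, h1, h2, h3⟩ := enc_inj he1
        subst hb h1 h2 h3 he2 he3
        obtain ⟨ls1, ls2, hR⟩ := ih hqf true z.2.1 z.1.2.2 z.2.2 rfl
        exact ⟨ls1, z.1.2.1 :: ls2,
          R.c2s (show (z.1.1, z.1.2.1, z.1.2.2) ∈ A2.δ from hz1) hzc hR⟩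
    · -- dLT
      obtain ⟨z, hz, he⟩ := Finset.mem_image.1 hm
      obtain ⟨hz1, hz2⟩ := Finset.mem_product.1 hz
      obtain ⟨hzm, hσ⟩ := Finset.mem_filter.1 hz1
      obtain ⟨ht1, ht2⟩ := Finset.mem_product.1 hzm
      obtain ⟨σ, hσ1, hσ2⟩ := hσ
      rw [Prod.ext_iff] at he
      obtain ⟨he1, he2⟩ := he
      rw [Prod.ext_iff] at he2
      obtain ⟨he2, he3⟩ := he2
      dsimp only at he1 he2 he3
      obtain ⟨hb, h1, h2, h3⟩ := enc_inj he1
      subst hb h1 h2 h3 he2 he3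
      obtain ⟨ls1, ls2, hR⟩ := ih hqf false z.1.1.2.2 z.1.2.2.2 z.1.1.2.2 rfl
      have ht1' : (z.1.1.1, VLabel.letter σ, z.1.1.2.2) ∈ A1.δ := by
        have h0 : (z.1.1.1, z.1.1.2.1, z.1.1.2.2) ∈ A1.δ := ht1
        rwa [hσ1] at h0
      have ht2' : (z.1.2.1, VLabel.letter σ, z.1.2.2.2) ∈ A2.δ := by
        have h0 : (z.1.2.1, z.1.2.2.1, z.1.2.2.2) ∈ A2.δ := ht2
        rwa [hσ2] at h0
      rw [hσ1]
      exact ⟨VLabel.letter σ :: ls1, VLabel.letter σ :: ls2, R.lt (a1 := z.2) ht1' ht2' hR⟩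
/-! ### Run invariants -/

def IsOp (o : VLabel Sig) : Prop := ∃ x, o = VLabel.openv x ∨ o = VLabel.closev x

def InvO (pre pre1 pre2 : List (VLabel Sig)) (o : VLabel Sig) : Prop :=
  pre.count o ≤ 1 ∧ (o ∈ pre ↔ (o ∈ pre1 ∨ o ∈ pre2)) ∧
  (o ∈ pre1 → posOf pre1 o = posOf pre o) ∧ (o ∈ pre2 → posOf pre2 o = posOf pre o)

def InvPre (pre pre1 pre2 : List (VLabel Sig)) : Prop :=
  ∀ x : ℕ, InvO pre pre1 pre2 (VLabel.openv x) ∧ InvO pre pre1 pre2 (VLabel.closev x)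

lemma invPre_nil : InvPre ([] : List (VLabel Sig)) [] [] := by
  intro x; constructor <;> exact ⟨by simp, by simp, by simp, by simp⟩

lemma isOp_not_letter {o : VLabel Sig} (h : IsOp o) : ¬ isLetterL o = true := by
  obtain ⟨x, h | h⟩ := h <;> subst h <;> simp [isLetterL]

lemma nLet_singleton_op {o : VLabel Sig} (h : IsOp o) : nLet [o] = 0 := by
  simp [nLet, List.countP_cons, isOp_not_letter h]

lemma invO_eps {pre pre1 pre2 : List (VLabel Sig)} {o : VLabel Sig} (hop : IsOp o)
    (h : InvO pre pre1 pre2 o) : InvO (pre ++ [VLabel.eps]) pre1 pre2 o := by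
  obtain ⟨h1, h2, h3, h4⟩ := h
  have hne : o ≠ VLabel.eps := by obtain ⟨x, h | h⟩ := hop <;> subst h <;> simp
  refine ⟨?_, ?_, ?_, ?_⟩
  · rw [List.count_append]
    have : List.count o [VLabel.eps] = 0 := List.count_eq_zero.2 (by simpa using hne)
    omega
  · simp only [List.mem_append, List.mem_singleton]
    constructor
    · rintro (h' | h'); exact h2.1 h'; exact absurd h' hne
    · intro h'; exact Or.inl (h2.2 h')
  · intro hm; rw [posOf_append_left _ (h2.2 (Or.inl hm))]
    exact h3 hm
  · intro hm; rw [posOf_append_left _ (h2.2 (Or.inr hm))]; exact h4 hm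

lemma invO_letter {pre pre1 pre2 : List (VLabel Sig)} {o : VLabel Sig} (hop : IsOp o) (σ : Sig)
    (h : InvO pre pre1 pre2 o) :
    InvO (pre ++ [VLabel.letter σ]) (pre1 ++ [VLabel.letter σ]) (pre2 ++ [VLabel.letter σ]) o := by
  obtain ⟨h1, h2, h3, h4⟩ := h
  have hne : o ≠ VLabel.letter σ := by obtain ⟨x, h | h⟩ := hop <;> subst h <;> simp
  refine ⟨?_, ?_, ?_, ?_⟩
  · rw [List.count_append]
    have : List.count o [VLabel.letter σ] = 0 := List.count_eq_zero.2 (by simpa using hne)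
    omega
  · simp only [List.mem_append, List.mem_singleton]
    constructor
    · rintro (h' | h'); · rcases h2.1 h' with h'' | h''; exact Or.inl (Or.inl h''); exact Or.inr (Or.inl h'')
      · exact absurd h' hne
    · rintro ((h' | h') | (h' | h'))
      · exact Or.inl (h2.2 (Or.inl h'))
      · exact absurd h' hne
      · exact Or.inl (h2.2 (Or.inr h'))
      · exact absurd h' hne
  · intro hm
    rcases List.mem_append.1 hm with hm' | hm'
    · rw [posOf_append_left _ hm', posOf_append_left _ (h2.2 (Or.inl hm'))]; exact h3 hm'
    · simp at hm'; exact absurd hm' hne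
  · intro hm
    rcases List.mem_append.1 hm with hm' | hm'
    · rw [posOf_append_left _ hm', posOf_append_left _ (h2.2 (Or.inr hm'))]; exact h4 hm'
    · simp at hm'; exact absurd hm' hne

lemma invPre_eps {pre pre1 pre2 : List (VLabel Sig)} (h : InvPre pre pre1 pre2) :
    InvPre (pre ++ [VLabel.eps]) pre1 pre2 := fun x =>
  ⟨invO_eps ⟨x, Or.inl rfl⟩ (h x).1, invO_eps ⟨x, Or.inr rfl⟩ (h x).2⟩

lemma invPre_letter {pre pre1 pre2 : List (VLabel Sig)} (σ : Sig) (h : InvPre pre pre1 pre2) :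
    InvPre (pre ++ [VLabel.letter σ]) (pre1 ++ [VLabel.letter σ]) (pre2 ++ [VLabel.letter σ]) :=
  fun x => ⟨invO_letter ⟨x, Or.inl rfl⟩ σ (h x).1, invO_letter ⟨x, Or.inr rfl⟩ σ (h x).2⟩

lemma invO_emit1 {pre pre1 pre2 : List (VLabel Sig)} {o o' : VLabel Sig}
    (hnp : o ∉ pre) (hnp1 : o ∉ pre1) (hnp2 : o ∉ pre2) (hn : nLet pre = nLet pre1)
    (h : InvO pre pre1 pre2 o') : InvO (pre ++ [o]) (pre1 ++ [o]) pre2 o' := by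
  obtain ⟨h1, h2, h3, h4⟩ := h
  by_cases he : o' = o
  · subst he
    refine ⟨?_, ?_, ?_, ?_⟩
    · rw [List.count_append]
      have h0 : pre.count o' = 0 := List.count_eq_zero.2 hnp
      have h1' : List.count o' [o'] = 1 := by simp
      omega
    · constructor
      · intro _; exact Or.inl (List.mem_append.2 (Or.inr (List.mem_singleton.2 rfl)))
      · intro _; exact List.mem_append.2 (Or.inr (List.mem_singleton.2 rfl))
    · intro _
      rw [posOf_append_right _ hnp1, posOf_append_right _ hnp, hn]
    · intro hm; exact absurd hm hnp2
  · refine ⟨?_, ?_, ?_, ?_⟩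
    · rw [List.count_append]
      have h1' : List.count o' [o] = 0 := by
        simp [List.count_singleton']; exact fun hx => absurd hx.symm he
      omega
    · constructor
      · intro hm
        rcases List.mem_append.1 hm with hm' | hm'
        · rcases h2.1 hm' with h'' | h''
          · exact Or.inl (List.mem_append.2 (Or.inl h''))
          · exact Or.inr h''
        · exact absurd (List.mem_singleton.1 hm') he
      · rintro (hm | hm)
        · rcases List.mem_append.1 hm with hm' | hm'
          · exact List.mem_append.2 (Or.inl (h2.2 (Or.inl hm')))
          · exact absurd (List.mem_singleton.1 hm') he
        · exact List.mem_append.2 (Or.inl (h2.2 (Or.inr hm)))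
    · intro hm
      rcases List.mem_append.1 hm with hm' | hm'
      · rw [posOf_append_left _ hm', posOf_append_left _ (h2.2 (Or.inl hm'))]; exact h3 hm'
      · exact absurd (List.mem_singleton.1 hm') he
    · intro hm; rw [posOf_append_left _ (h2.2 (Or.inr hm))]; exact h4 hm

lemma invPre_emit1 {pre pre1 pre2 : List (VLabel Sig)} {o : VLabel Sig} (hop : IsOp o)
    (hnp1 : o ∉ pre1) (hnp2 : o ∉ pre2) (hn : nLet pre = nLet pre1)
    (h : InvPre pre pre1 pre2) : InvPre (pre ++ [o]) (pre1 ++ [o]) pre2 := by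
  have hnp : o ∉ pre := by
    obtain ⟨x, ho | ho⟩ := hop <;> subst ho
    · exact fun hm => (((h x).1.2.1.1 hm).elim hnp1 hnp2)
    · exact fun hm => (((h x).2.2.1.1 hm).elim hnp1 hnp2)
  exact fun x => ⟨invO_emit1 hnp hnp1 hnp2 hn (h x).1, invO_emit1 hnp hnp1 hnp2 hn (h x).2⟩

lemma invO_emit2 {pre pre1 pre2 : List (VLabel Sig)} {o o' : VLabel Sig}
    (hnp : o ∉ pre) (hnp1 : o ∉ pre1) (hnp2 : o ∉ pre2) (hn : nLet pre = nLet pre2)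
    (h : InvO pre pre1 pre2 o') : InvO (pre ++ [o]) pre1 (pre2 ++ [o]) o' := by
  obtain ⟨h1, h2, h3, h4⟩ := h
  by_cases he : o' = o
  · subst he
    refine ⟨?_, ?_, ?_, ?_⟩
    · rw [List.count_append]
      have h0 : pre.count o' = 0 := List.count_eq_zero.2 hnp
      have h1' : List.count o' [o'] = 1 := by simp
      omega
    · constructor
      · intro _; exact Or.inr (List.mem_append.2 (Or.inr (List.mem_singleton.2 rfl)))
      · intro _; exact List.mem_append.2 (Or.inr (List.mem_singleton.2 rfl))
    · intro hm; exact absurd hm hnp1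
    · intro _
      rw [posOf_append_right _ hnp2, posOf_append_right _ hnp, hn]
  · refine ⟨?_, ?_, ?_, ?_⟩
    · rw [List.count_append]
      have h1' : List.count o' [o] = 0 := by
        simp [List.count_singleton']; exact fun hx => absurd hx.symm he
      omega
    · constructor
      · intro hm
        rcases List.mem_append.1 hm with hm' | hm'
        · rcases h2.1 hm' with h'' | h''
          · exact Or.inl h''
          · exact Or.inr (List.mem_append.2 (Or.inl h''))
        · exact absurd (List.mem_singleton.1 hm') he
      · rintro (hm | hm)
        · exact List.mem_append.2 (Or.inl (h2.2 (Or.inl hm)))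
        · rcases List.mem_append.1 hm with hm' | hm'
          · exact List.mem_append.2 (Or.inl (h2.2 (Or.inr hm')))
          · exact absurd (List.mem_singleton.1 hm') he
    · intro hm; rw [posOf_append_left _ (h2.2 (Or.inl hm))]; exact h3 hm
    · intro hm
      rcases List.mem_append.1 hm with hm' | hm'
      · rw [posOf_append_left _ hm', posOf_append_left _ (h2.2 (Or.inr hm'))]; exact h4 hm'
      · exact absurd (List.mem_singleton.1 hm') he

lemma invPre_emit2 {pre pre1 pre2 : List (VLabel Sig)} {o : VLabel Sig} (hop : IsOp o)
    (hnp1 : o ∉ pre1) (hnp2 : o ∉ pre2) (hn : nLet pre = nLet pre2)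
    (h : InvPre pre pre1 pre2) : InvPre (pre ++ [o]) pre1 (pre2 ++ [o]) := by
  have hnp : o ∉ pre := by
    obtain ⟨x, ho | ho⟩ := hop <;> subst ho
    · exact fun hm => (((h x).1.2.1.1 hm).elim hnp1 hnp2)
    · exact fun hm => (((h x).2.2.1.1 hm).elim hnp1 hnp2)
  exact fun x => ⟨invO_emit2 hnp hnp1 hnp2 hn (h x).1, invO_emit2 hnp hnp1 hnp2 hn (h x).2⟩

lemma invO_sil2 {pre pre1 pre2 : List (VLabel Sig)} {o o' : VLabel Sig}
    (hop' : IsOp o') (hnp2 : o ∉ pre2) (hmem : o ∈ pre) (hpos : posOf pre o = 1 + nLet pre2)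
    (h : InvO pre pre1 pre2 o') : InvO (pre ++ [VLabel.eps]) pre1 (pre2 ++ [o]) o' := by
  obtain ⟨h1, h2, h3, h4⟩ := h
  have hne : o' ≠ VLabel.eps := by obtain ⟨x, ho | ho⟩ := hop' <;> subst ho <;> simp
  have hc : List.count o' [(VLabel.eps : VLabel Sig)] = 0 := by
    simp [List.count_singleton']; exact fun hx => absurd hx.symm hne
  by_cases he : o' = o
  · subst he
    refine ⟨?_, ?_, ?_, ?_⟩
    · rw [List.count_append]; omega
    · constructor
      · intro _; exact Or.inr (List.mem_append.2 (Or.inr (List.mem_singleton.2 rfl)))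
      · intro _; exact List.mem_append.2 (Or.inl hmem)
    · intro hm; rw [posOf_append_left _ hmem]; exact h3 hm
    · intro _
      rw [posOf_append_left _ hmem, posOf_append_right _ hnp2, hpos]
      have : posOf [o'] o' = 1 := posOf_cons_self o' []
      omega
  · refine ⟨?_, ?_, ?_, ?_⟩
    · rw [List.count_append]; omega
    · constructor
      · intro hm
        rcases List.mem_append.1 hm with hm' | hm'
        · rcases h2.1 hm' with h'' | h''
          · exact Or.inl h''
          · exact Or.inr (List.mem_append.2 (Or.inl h''))
        · exact absurd (List.mem_singleton.1 hm') hne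
      · rintro (hm | hm)
        · exact List.mem_append.2 (Or.inl (h2.2 (Or.inl hm)))
        · rcases List.mem_append.1 hm with hm' | hm'
          · exact List.mem_append.2 (Or.inl (h2.2 (Or.inr hm')))
          · exact absurd (List.mem_singleton.1 hm') he
    · intro hm; rw [posOf_append_left _ (h2.2 (Or.inl hm))]; exact h3 hm
    · intro hm
      rcases List.mem_append.1 hm with hm' | hm'
      · rw [posOf_append_left _ (h2.2 (Or.inr hm')), posOf_append_left _ hm']; exact h4 hm'
      · exact absurd (List.mem_singleton.1 hm') he

lemma invPre_sil2 {pre pre1 pre2 : List (VLabel Sig)} {o : VLabel Sig} (hop : IsOp o)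
    (hnp2 : o ∉ pre2) (hmem : o ∈ pre) (hpos : posOf pre o = 1 + nLet pre2)
    (h : InvPre pre pre1 pre2) : InvPre (pre ++ [VLabel.eps]) pre1 (pre2 ++ [o]) :=
  fun x => ⟨invO_sil2 ⟨x, Or.inl rfl⟩ hnp2 hmem hpos (h x).1,
    invO_sil2 ⟨x, Or.inr rfl⟩ hnp2 hmem hpos (h x).2⟩

/-! ### simple consequences of `R` -/

lemma R_comp1 {A1 A2 : VA Sig} {b : Bool} {q1 q2 a1 : ℕ} {ls ls1 ls2 : List (VLabel Sig)}
    (h : R A1 A2 b q1 q2 a1 ls ls1 ls2) : ∃ f1 ∈ A1.F, A1.PathFrom q1 ls1 f1 := by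
  induction h with
  | done h1 h2 ha => exact ⟨_, h1, VA.PathFrom.nil _⟩
  | sw h ih => exact ih
  | c1 ht hok h ih => obtain ⟨f1, hf1, hp⟩ := ih; exact ⟨f1, hf1, VA.PathFrom.cons ht hp⟩
  | c2 ht hok h ih => exact ih
  | c2s ht hok h ih => exact ih
  | lt h1 h2 h ih => obtain ⟨f1, hf1, hp⟩ := ih; exact ⟨f1, hf1, VA.PathFrom.cons h1 hp⟩

lemma R_comp2 {A1 A2 : VA Sig} {b : Bool} {q1 q2 a1 : ℕ} {ls ls1 ls2 : List (VLabel Sig)}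
    (h : R A1 A2 b q1 q2 a1 ls ls1 ls2) : ∃ f2 ∈ A2.F, A2.PathFrom q2 ls2 f2 := by
  induction h with
  | done h1 h2 ha => exact ⟨_, h2, VA.PathFrom.nil _⟩
  | sw h ih => exact ih
  | c1 ht hok h ih => exact ih
  | c2 ht hok h ih => obtain ⟨f2, hf2, hp⟩ := ih; exact ⟨f2, hf2, VA.PathFrom.cons ht hp⟩
  | c2s ht hok h ih => obtain ⟨f2, hf2, hp⟩ := ih; exact ⟨f2, hf2, VA.PathFrom.cons ht hp⟩
  | lt h1 h2 h ih => obtain ⟨f2, hf2, hp⟩ := ih; exact ⟨f2, hf2, VA.PathFrom.cons h2 hp⟩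

lemma isLetterL_eq_false {l : VLabel Sig} (h : ∀ σ, l ≠ VLabel.letter σ) :
    isLetterL l = false := by
  cases l with
  | letter σ => exact absurd rfl (h σ)
  | _ => rfl

lemma readWord_cons_not_letter {l : VLabel Sig} (ls : List (VLabel Sig))
    (h : ∀ σ, l ≠ VLabel.letter σ) : readWord (l :: ls) = readWord ls := by
  cases l with
  | letter σ => exact absurd rfl (h σ)
  | eps => rfl
  | openv x => rfl
  | closev x => rfl

lemma readWord_cons_letter (σ : Sig) (ls : List (VLabel Sig)) :
    readWord (VLabel.letter σ :: ls) = σ :: readWord ls := rfl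

lemma readWord_append (l1 l2 : List (VLabel Sig)) :
    readWord (l1 ++ l2) = readWord l1 ++ readWord l2 := by
  simp [readWord]

lemma C2s_isOp {A1 A2 : VA Sig} {l : VLabel Sig} {q1 a1 : ℕ} (h : C2s A1 A2 l q1 a1) :
    IsOp l := by
  rcases h with ⟨x, hx, _⟩ | ⟨x, hx, _⟩
  · exact ⟨x, Or.inl hx⟩
  · exact ⟨x, Or.inr hx⟩

lemma isOp_not_letter' {o : VLabel Sig} (h : IsOp o) : ∀ σ, o ≠ VLabel.letter σ := by
  obtain ⟨x, h | h⟩ := h <;> subst h <;> intro σ <;> simp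

lemma nLet_cons_not_letter {l : VLabel Sig} (ls : List (VLabel Sig))
    (h : ∀ σ, l ≠ VLabel.letter σ) : nLet (l :: ls) = nLet ls := by
  rw [nLet_cons, isLetterL_eq_false h]; simp

lemma R_read {A1 A2 : VA Sig} {b : Bool} {q1 q2 a1 : ℕ} {ls ls1 ls2 : List (VLabel Sig)}
    (h : R A1 A2 b q1 q2 a1 ls ls1 ls2) :
    readWord ls = readWord ls1 ∧ readWord ls = readWord ls2 ∧
      nLet ls = nLet ls1 ∧ nLet ls = nLet ls2 := by
  induction h with
  | done h1 h2 ha => simp [readWord, nLet]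
  | @sw q1' q2' a1' ls' ls1' ls2' h ih =>
    obtain ⟨i1, i2, i3, i4⟩ := ih
    have e1 : readWord (VLabel.eps :: ls') = readWord ls' :=
      readWord_cons_not_letter _ (fun σ h => by cases h)
    have e2 : nLet (VLabel.eps :: ls') = nLet ls' := by
      rw [nLet_cons]; simp [isLetterL]
    rw [e1, e2]
    exact ⟨i1, i2, i3, i4⟩
  | @c1 _ _ _ _ l _ _ _ ht hok h ih =>
    obtain ⟨i1, i2, i3, i4⟩ := ih
    rw [readWord_cons_not_letter _ hok.1, readWord_cons_not_letter _ hok.1,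
      nLet_cons_not_letter _ hok.1, nLet_cons_not_letter _ hok.1]
    exact ⟨i1, i2, i3, i4⟩
  | @c2 _ _ _ _ l _ _ _ ht hok h ih =>
    obtain ⟨i1, i2, i3, i4⟩ := ih
    rw [readWord_cons_not_letter _ hok.1, readWord_cons_not_letter _ hok.1,
      nLet_cons_not_letter _ hok.1, nLet_cons_not_letter _ hok.1]
    exact ⟨i1, i2, i3, i4⟩
  | @c2s _ _ _ _ l _ _ _ ht hok h ih =>
    obtain ⟨i1, i2, i3, i4⟩ := ih
    have hnl := isOp_not_letter' (C2s_isOp hok)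
    rw [readWord_cons_not_letter _ (fun σ h => by cases h), readWord_cons_not_letter _ hnl,
      nLet_cons_not_letter _ (fun σ h => by cases h), nLet_cons_not_letter _ hnl]
    exact ⟨i1, i2, i3, i4⟩
  | @lt _ _ _ _ _ σ _ _ _ h1 h2 h ih =>
    obtain ⟨i1, i2, i3, i4⟩ := ih
    rw [readWord_cons_letter, readWord_cons_letter, readWord_cons_letter,
      nLet_cons, nLet_cons, nLet_cons]
    exact ⟨by rw [i1], by rw [i2], by omega, by omega⟩
/-! ### eps extension helpers for component lists -/

lemma invO_eps1 {pre pre1 pre2 : List (VLabel Sig)} {o : VLabel Sig} (hop : IsOp o)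
    (h : InvO pre pre1 pre2 o) : InvO (pre ++ [VLabel.eps]) (pre1 ++ [VLabel.eps]) pre2 o := by
  obtain ⟨h1, h2, h3, h4⟩ := h
  have hne : o ≠ VLabel.eps := by obtain ⟨x, ho | ho⟩ := hop <;> subst ho <;> simp
  have hc : List.count o [(VLabel.eps : VLabel Sig)] = 0 := by
    simp [List.count_singleton']; exact fun hx => absurd hx.symm hne
  refine ⟨by rw [List.count_append]; omega, ?_, ?_, ?_⟩
  · constructor
    · intro hm
      rcases List.mem_append.1 hm with hm' | hm'
      · rcases h2.1 hm' with h'' | h''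
        · exact Or.inl (List.mem_append.2 (Or.inl h''))
        · exact Or.inr h''
      · exact absurd (List.mem_singleton.1 hm') hne
    · rintro (hm | hm)
      · rcases List.mem_append.1 hm with hm' | hm'
        · exact List.mem_append.2 (Or.inl (h2.2 (Or.inl hm')))
        · exact absurd (List.mem_singleton.1 hm') hne
      · exact List.mem_append.2 (Or.inl (h2.2 (Or.inr hm)))
  · intro hm
    rcases List.mem_append.1 hm with hm' | hm'
    · rw [posOf_append_left _ hm', posOf_append_left _ (h2.2 (Or.inl hm'))]; exact h3 hm'
    · exact absurd (List.mem_singleton.1 hm') hne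
  · intro hm; rw [posOf_append_left _ (h2.2 (Or.inr hm))]; exact h4 hm

lemma invPre_eps1 {pre pre1 pre2 : List (VLabel Sig)} (h : InvPre pre pre1 pre2) :
    InvPre (pre ++ [VLabel.eps]) (pre1 ++ [VLabel.eps]) pre2 := fun x =>
  ⟨invO_eps1 ⟨x, Or.inl rfl⟩ (h x).1, invO_eps1 ⟨x, Or.inr rfl⟩ (h x).2⟩

lemma invO_eps2 {pre pre1 pre2 : List (VLabel Sig)} {o : VLabel Sig} (hop : IsOp o)
    (h : InvO pre pre1 pre2 o) : InvO (pre ++ [VLabel.eps]) pre1 (pre2 ++ [VLabel.eps]) o := by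
  obtain ⟨h1, h2, h3, h4⟩ := h
  have hne : o ≠ VLabel.eps := by obtain ⟨x, ho | ho⟩ := hop <;> subst ho <;> simp
  have hc : List.count o [(VLabel.eps : VLabel Sig)] = 0 := by
    simp [List.count_singleton']; exact fun hx => absurd hx.symm hne
  refine ⟨by rw [List.count_append]; omega, ?_, ?_, ?_⟩
  · constructor
    · intro hm
      rcases List.mem_append.1 hm with hm' | hm'
      · rcases h2.1 hm' with h'' | h''
        · exact Or.inl h''
        · exact Or.inr (List.mem_append.2 (Or.inl h''))
      · exact absurd (List.mem_singleton.1 hm') hne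
    · rintro (hm | hm)
      · exact List.mem_append.2 (Or.inl (h2.2 (Or.inl hm)))
      · rcases List.mem_append.1 hm with hm' | hm'
        · exact List.mem_append.2 (Or.inl (h2.2 (Or.inr hm')))
        · exact absurd (List.mem_singleton.1 hm') hne
  · intro hm; rw [posOf_append_left _ (h2.2 (Or.inl hm))]; exact h3 hm
  · intro hm
    rcases List.mem_append.1 hm with hm' | hm'
    · rw [posOf_append_left _ (h2.2 (Or.inr hm')), posOf_append_left _ hm']; exact h4 hm'
    · exact absurd (List.mem_singleton.1 hm') hne

lemma invPre_eps2 {pre pre1 pre2 : List (VLabel Sig)} (h : InvPre pre pre1 pre2) :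
    InvPre (pre ++ [VLabel.eps]) pre1 (pre2 ++ [VLabel.eps]) := fun x =>
  ⟨invO_eps2 ⟨x, Or.inl rfl⟩ (h x).1, invO_eps2 ⟨x, Or.inr rfl⟩ (h x).2⟩

lemma nLet_eq_zero_of_no_letter {pb : List (VLabel Sig)} (h : ∀ σ, VLabel.letter σ ∉ pb) :
    nLet pb = 0 := by
  apply List.countP_eq_zero.2
  intro a ha
  cases a with
  | letter σ => exact absurd ha (h σ)
  | _ => simp [isLetterL]

lemma posOf_eq_one_of_no_letter {pb : List (VLabel Sig)} (o : VLabel Sig) (h : nLet pb = 0) :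
    posOf pb o = 1 := by
  have hsub : (pb.takeWhile (fun a => a ≠ o)).Sublist pb := (List.takeWhile_prefix _).sublist
  have := hsub.countP_le (p := isLetterL)
  unfold posOf nLet at *
  omega

lemma nLet_single_not_letter {l : VLabel Sig} (h : ∀ σ, l ≠ VLabel.letter σ) :
    nLet [l] = 0 := nLet_cons_not_letter [] h

lemma eps_ne_letter : ∀ σ : Sig, (VLabel.eps : VLabel Sig) ≠ VLabel.letter σ :=
  fun _ h => nomatch h

lemma nLet_single_eps : nLet [(VLabel.eps : VLabel Sig)] = 0 :=
  nLet_single_not_letter eps_ne_letter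

/-! ### The master invariant lemma -/

lemma master {A1 A2 : VA Sig} (hs1 : A1.Sequential) (hs2 : A2.Sequential)
    (hsf1 : SemiFunctionalForSet A1 (Xv A1 A2)) (hsf2 : SemiFunctionalForSet A2 (Xv A1 A2))
    {b : Bool} {q1 q2 a1 : ℕ} {ls ls1 ls2 : List (VLabel Sig)}
    (h : R A1 A2 b q1 q2 a1 ls ls1 ls2) :
    ∀ pre pre1 pre2 pa pb : List (VLabel Sig),
      A1.PathFrom A1.q0 pre1 q1 → A2.PathFrom A2.q0 pre2 q2 →
      pre1 = pa ++ pb → A1.PathFrom A1.q0 pa a1 → A1.PathFrom a1 pb q1 →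
      (∀ σ, VLabel.letter σ ∉ pb) →
      ValidLabels (pre1 ++ ls1) → ValidLabels (pre2 ++ ls2) →
      nLet pre = nLet pre1 → nLet pre = nLet pre2 →
      InvPre pre pre1 pre2 →
      InvPre (pre ++ ls) (pre1 ++ ls1) (pre2 ++ ls2) := by
  induction h with
  | done hf1 hf2 ha =>
    intro pre pre1 pre2 pa pb hpre1 hpre2 hsp hpa hpbp hpbl hv1 hv2 hn1 hn2 hinv
    simpa using hinv
  | @sw q1 q2 a1 ls ls1 ls2 h ih =>
    intro pre pre1 pre2 pa pb hpre1 hpre2 hsp hpa hpbp hpbl hv1 hv2 hn1 hn2 hinv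
    rw [List.append_cons pre VLabel.eps ls]
    exact ih (pre ++ [VLabel.eps]) pre1 pre2 pa pb hpre1 hpre2 hsp hpa hpbp hpbl hv1 hv2
      (by simp [isLetterL]; omega) (by simp [isLetterL]; omega)
      (invPre_eps hinv)
  | @c1 q1 p1 q2 a1 l ls ls1 ls2 ht hok h ih =>
    intro pre pre1 pre2 pa pb hpre1 hpre2 hsp hpa hpbp hpbl hv1 hv2 hn1 hn2 hinv
    rw [List.append_cons pre l ls, List.append_cons pre1 l ls1]
    have hstep : A1.PathFrom q1 [l] p1 := VA.PathFrom.cons ht (VA.PathFrom.nil p1)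
    have hpre1' : A1.PathFrom A1.q0 (pre1 ++ [l]) p1 := pathFrom_append hpre1 hstep
    have hpbp' : A1.PathFrom a1 (pb ++ [l]) p1 := pathFrom_append hpbp hstep
    have hsp' : pre1 ++ [l] = pa ++ (pb ++ [l]) := by rw [hsp, List.append_assoc]
    have hpbl' : ∀ σ, VLabel.letter σ ∉ pb ++ [l] := by
      intro σ hm
      rcases List.mem_append.1 hm with hm' | hm'
      · exact hpbl σ hm'
      · exact hok.1 σ (List.mem_singleton.1 hm').symm
    have hv1' : ValidLabels ((pre1 ++ [l]) ++ ls1) := by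
      rwa [← List.append_cons pre1 l ls1]
    have hnl0 : nLet [l] = 0 := nLet_single_not_letter hok.1
    have hn1' : nLet (pre ++ [l]) = nLet (pre1 ++ [l]) := by simp [hnl0]; omega
    have hn2' : nLet (pre ++ [l]) = nLet pre2 := by simp [hnl0]; omega
    -- co-reachability witnesses
    obtain ⟨f1, hf1, hsuf1⟩ := R_comp1 h
    obtain ⟨f2, hf2, hsuf2⟩ := R_comp2 h
    have hinv' : InvPre (pre ++ [l]) (pre1 ++ [l]) pre2 := by
      cases l with
      | letter σ => exact absurd rfl (hok.1 σ)
      | eps => exact invPre_eps1 hinv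
      | openv x =>
        have hnp1 : (VLabel.openv x) ∉ pre1 := fun hm =>
          count_le_one_not_both (validLabels_count_open hv1 x) hm List.mem_cons_self
        have hnp2 : (VLabel.openv x) ∉ pre2 := by
          intro hm
          have hx2 : x ∈ varsOf A2 := pathFrom_open_vars hpre2 hm
          have hx1 : x ∈ varsOf A1 := open_mem_vars ht
          have hXv : x ∈ Xv A1 A2 := Finset.mem_inter.2 ⟨hx1, hx2⟩
          exact hok.2.1 x rfl hXv ⟨pre2, ⟨hpre2, ls2, f2, hsuf2, hf2⟩, hm⟩
        exact invPre_emit1 ⟨x, Or.inl rfl⟩ hnp1 hnp2 hn1 hinv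
      | closev x =>
        have hnp1 : (VLabel.closev x) ∉ pre1 := fun hm =>
          count_le_one_not_both (validLabels_count_close hv1 x) hm List.mem_cons_self
        have hnp2 : (VLabel.closev x) ∉ pre2 := by
          intro hm
          have hx2 : x ∈ varsOf A2 := pathFrom_close_vars hpre2 hm
          have hx1 : x ∈ varsOf A1 := close_mem_vars ht
          have hXv : x ∈ Xv A1 A2 := Finset.mem_inter.2 ⟨hx1, hx2⟩
          exact hok.2.2 x rfl hXv ⟨pre2, ⟨hpre2, ls2, f2, hsuf2, hf2⟩, hm⟩
        exact invPre_emit1 ⟨x, Or.inr rfl⟩ hnp1 hnp2 hn1 hinv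
    exact ih (pre ++ [l]) (pre1 ++ [l]) pre2 pa (pb ++ [l]) hpre1' hpre2 hsp' hpa hpbp' hpbl'
      hv1' hv2 hn1' hn2' hinv'
  | @c2 q1 q2 p2 a1 l ls ls1 ls2 ht hok h ih =>
    intro pre pre1 pre2 pa pb hpre1 hpre2 hsp hpa hpbp hpbl hv1 hv2 hn1 hn2 hinv
    rw [List.append_cons pre l ls, List.append_cons pre2 l ls2]
    have hstep : A2.PathFrom q2 [l] p2 := VA.PathFrom.cons ht (VA.PathFrom.nil p2)
    have hpre2' : A2.PathFrom A2.q0 (pre2 ++ [l]) p2 := pathFrom_append hpre2 hstep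
    have hv2' : ValidLabels ((pre2 ++ [l]) ++ ls2) := by
      rwa [← List.append_cons pre2 l ls2]
    have hnl0 : nLet [l] = 0 := nLet_single_not_letter hok.1
    have hn1' : nLet (pre ++ [l]) = nLet pre1 := by simp [hnl0]; omega
    have hn2' : nLet (pre ++ [l]) = nLet (pre2 ++ [l]) := by simp [hnl0]; omega
    obtain ⟨f1, hf1, hsuf1⟩ := R_comp1 h
    obtain ⟨f2, hf2, hsuf2⟩ := R_comp2 h
    have hinv' : InvPre (pre ++ [l]) pre1 (pre2 ++ [l]) := by
      cases l with
      | letter σ => exact absurd rfl (hok.1 σ)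
      | eps => exact invPre_eps2 hinv
      | openv x =>
        have hnp2 : (VLabel.openv x) ∉ pre2 := fun hm =>
          count_le_one_not_both (validLabels_count_open hv2 x) hm List.mem_cons_self
        have hnp1 : (VLabel.openv x) ∉ pre1 := by
          intro hm
          have hx1 : x ∈ varsOf A1 := pathFrom_open_vars hpre1 hm
          have hx2 : x ∈ varsOf A2 := open_mem_vars ht
          have hXv : x ∈ Xv A1 A2 := Finset.mem_inter.2 ⟨hx1, hx2⟩
          exact hok.2.1 x rfl hXv ⟨pre1, ⟨hpre1, ls1, f1, hsuf1, hf1⟩, hm⟩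
        exact invPre_emit2 ⟨x, Or.inl rfl⟩ hnp1 hnp2 hn2 hinv
      | closev x =>
        have hnp2 : (VLabel.closev x) ∉ pre2 := fun hm =>
          count_le_one_not_both (validLabels_count_close hv2 x) hm List.mem_cons_self
        have hnp1 : (VLabel.closev x) ∉ pre1 := by
          intro hm
          have hx1 : x ∈ varsOf A1 := pathFrom_close_vars hpre1 hm
          have hx2 : x ∈ varsOf A2 := close_mem_vars ht
          have hXv : x ∈ Xv A1 A2 := Finset.mem_inter.2 ⟨hx1, hx2⟩
          exact hok.2.2 x rfl hXv ⟨pre1, ⟨hpre1, ls1, f1, hsuf1, hf1⟩, hm⟩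
        exact invPre_emit2 ⟨x, Or.inr rfl⟩ hnp1 hnp2 hn2 hinv
    exact ih (pre ++ [l]) pre1 (pre2 ++ [l]) pa pb hpre1 hpre2' hsp hpa hpbp hpbl
      hv1 hv2' hn1' hn2' hinv'
  | @c2s q1 q2 p2 a1 l ls ls1 ls2 ht hok h ih =>
    intro pre pre1 pre2 pa pb hpre1 hpre2 hsp hpa hpbp hpbl hv1 hv2 hn1 hn2 hinv
    rw [List.append_cons pre VLabel.eps ls, List.append_cons pre2 l ls2]
    have hstep : A2.PathFrom q2 [l] p2 := VA.PathFrom.cons ht (VA.PathFrom.nil p2)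
    have hpre2' : A2.PathFrom A2.q0 (pre2 ++ [l]) p2 := pathFrom_append hpre2 hstep
    have hv2' : ValidLabels ((pre2 ++ [l]) ++ ls2) := by
      rwa [← List.append_cons pre2 l ls2]
    have hepsl : nLet [(VLabel.eps : VLabel Sig)] = 0 := nLet_single_eps
    have hnl0 : nLet [l] = 0 := nLet_single_not_letter (isOp_not_letter' (C2s_isOp hok))
    have hn1' : nLet (pre ++ [VLabel.eps]) = nLet pre1 := by simp [hepsl]; omega
    have hn2' : nLet (pre ++ [VLabel.eps]) = nLet (pre2 ++ [l]) := by
      simp [hepsl, hnl0]; omega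
    obtain ⟨f1, hf1, hsuf1⟩ := R_comp1 h
    obtain ⟨f2, hf2, hsuf2⟩ := R_comp2 h
    have hpr1 : PrefixRun A1 pre1 q1 := ⟨hpre1, ls1, f1, hsuf1, hf1⟩
    have hpra : PrefixRun A1 pa a1 :=
      ⟨hpa, pb ++ ls1, f1, pathFrom_append hpbp hsuf1, hf1⟩
    have hnpb : nLet pb = 0 := nLet_eq_zero_of_no_letter hpbl
    have hinv' : InvPre (pre ++ [VLabel.eps]) pre1 (pre2 ++ [l]) := by
      rcases hok with ⟨x, hl, hXv, hga, hgq⟩ | ⟨x, hl, hXv, hga, hgq⟩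
      · subst hl
        have hnp2 : (VLabel.openv x) ∉ pre2 := fun hm =>
          count_le_one_not_both (validLabels_count_open hv2 x) hm List.mem_cons_self
        have hm1 : (VLabel.openv x) ∈ pre1 := by
          by_contra hno
          exact (not_opensAt hs1 (hsf1 x hXv) hpr1 hno) hgq
        have hmpa : (VLabel.openv x) ∉ pa := fun hm => hga ⟨pa, hpra, hm⟩
        have hmpb : (VLabel.openv x) ∈ pb := by
          rw [hsp] at hm1
          rcases List.mem_append.1 hm1 with hm' | hm'
          · exact absurd hm' hmpa
          · exact hm'
        have hpos1 : posOf pre1 (VLabel.openv x) = 1 + nLet pre1 := by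
          rw [hsp, posOf_append_right _ hmpa, posOf_eq_one_of_no_letter _ hnpb]
          simp [hnpb]; omega
        have hmem : (VLabel.openv x) ∈ pre := ((hinv x).1.2.1).2 (Or.inl hm1)
        have hpos : posOf pre (VLabel.openv x) = 1 + nLet pre2 := by
          have := ((hinv x).1.2.2.1) hm1
          omega
        exact invPre_sil2 ⟨x, Or.inl rfl⟩ hnp2 hmem hpos hinv
      · subst hl
        have hnp2 : (VLabel.closev x) ∉ pre2 := fun hm =>
          count_le_one_not_both (validLabels_count_close hv2 x) hm List.mem_cons_self
        have hm1 : (VLabel.closev x) ∈ pre1 := by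
          by_contra hno
          exact (not_closesAt hs1 (hsf1 x hXv) hpr1 hno) hgq
        have hmpa : (VLabel.closev x) ∉ pa := fun hm => hga ⟨pa, hpra, hm⟩
        have hmpb : (VLabel.closev x) ∈ pb := by
          rw [hsp] at hm1
          rcases List.mem_append.1 hm1 with hm' | hm'
          · exact absurd hm' hmpa
          · exact hm'
        have hpos1 : posOf pre1 (VLabel.closev x) = 1 + nLet pre1 := by
          rw [hsp, posOf_append_right _ hmpa, posOf_eq_one_of_no_letter _ hnpb]
          simp [hnpb]; omega
        have hmem : (VLabel.closev x) ∈ pre := ((hinv x).2.2.1).2 (Or.inl hm1)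
        have hpos : posOf pre (VLabel.closev x) = 1 + nLet pre2 := by
          have := ((hinv x).2.2.2.1) hm1
          omega
        exact invPre_sil2 ⟨x, Or.inr rfl⟩ hnp2 hmem hpos hinv
    exact ih (pre ++ [VLabel.eps]) pre1 (pre2 ++ [l]) pa pb hpre1 hpre2' hsp hpa hpbp hpbl
      hv1 hv2' hn1' hn2' hinv'
  | @lt q1 p1 q2 p2 a1 σ ls ls1 ls2 ht1 ht2 h ih =>
    intro pre pre1 pre2 pa pb hpre1 hpre2 hsp hpa hpbp hpbl hv1 hv2 hn1 hn2 hinv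
    rw [List.append_cons pre (VLabel.letter σ) ls, List.append_cons pre1 (VLabel.letter σ) ls1,
      List.append_cons pre2 (VLabel.letter σ) ls2]
    have hstep1 : A1.PathFrom q1 [VLabel.letter σ] p1 := VA.PathFrom.cons ht1 (VA.PathFrom.nil p1)
    have hstep2 : A2.PathFrom q2 [VLabel.letter σ] p2 := VA.PathFrom.cons ht2 (VA.PathFrom.nil p2)
    have hpre1' := pathFrom_append hpre1 hstep1
    have hpre2' := pathFrom_append hpre2 hstep2
    have hv1' : ValidLabels ((pre1 ++ [VLabel.letter σ]) ++ ls1) := by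
      rwa [← List.append_cons]
    have hv2' : ValidLabels ((pre2 ++ [VLabel.letter σ]) ++ ls2) := by
      rwa [← List.append_cons]
    have hone : nLet [(VLabel.letter σ : VLabel Sig)] = 1 := by
      simp [nLet, List.countP_cons, isLetterL]
    have hn1' : nLet (pre ++ [VLabel.letter σ]) = nLet (pre1 ++ [VLabel.letter σ]) := by
      simp [hone]; omega
    have hn2' : nLet (pre ++ [VLabel.letter σ]) = nLet (pre2 ++ [VLabel.letter σ]) := by
      simp [hone]; omega
    exact ih (pre ++ [VLabel.letter σ]) (pre1 ++ [VLabel.letter σ]) (pre2 ++ [VLabel.letter σ])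
      (pre1 ++ [VLabel.letter σ]) [] hpre1' hpre2' (by simp) hpre1' (VA.PathFrom.nil p1)
      (by simp) hv1' hv2' hn1' hn2' (invPre_letter σ hinv)
/-! ### Deriving semantics facts from the invariant -/

lemma validLabels_counts {ls : List (VLabel Sig)} (h : ValidLabels ls) :
    ∀ x : ℕ, ls.count (VLabel.openv x) ≤ 1 ∧ ls.count (VLabel.closev x) ≤ 1 ∧
      ((VLabel.openv x) ∈ ls ↔ (VLabel.closev x) ∈ ls) :=
  fun x => ⟨(h x).1, (h x).2.1, (h x).2.2.1⟩

lemma invPre_validLabels {f f1 f2 : List (VLabel Sig)} (hinv : InvPre f f1 f2)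
    (hv1 : ValidLabels f1) (hv2 : ValidLabels f2) : ValidLabels f := by
  apply validLabels_of
  intro x
  obtain ⟨ho1, ho2, ho3, ho4⟩ := (hinv x).1
  obtain ⟨hc1, hc2, hc3, hc4⟩ := (hinv x).2
  refine ⟨ho1, hc1, ?_, ?_⟩
  · rw [ho2, hc2, validLabels_iff_mem hv1 x, validLabels_iff_mem hv2 x]
  · intro hm
    rcases ho2.1 hm with hm' | hm'
    · have hmc : (VLabel.closev x) ∈ f1 := (validLabels_iff_mem hv1 x).1 hm'
      rw [← ho3 hm', ← hc3 hmc]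
      exact validLabels_posOf hv1 hm'
    · have hmc : (VLabel.closev x) ∈ f2 := (validLabels_iff_mem hv2 x).1 hm'
      rw [← ho4 hm', ← hc4 hmc]
      exact validLabels_posOf hv2 hm'

lemma invPre_runMapping {f f1 f2 : List (VLabel Sig)} (hinv : InvPre f f1 f2)
    (hv1 : ValidLabels f1) (hv2 : ValidLabels f2) (hvf : ValidLabels f) :
    runMapping f = munion (runMapping f1) (runMapping f2) := by
  funext x
  obtain ⟨ho1, ho2, ho3, ho4⟩ := (hinv x).1
  obtain ⟨hc1, hc2, hc3, hc4⟩ := (hinv x).2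
  rw [runMapping_eq_posOf (validLabels_counts hvf) x]
  rw [show munion (runMapping f1) (runMapping f2) x =
    (match runMapping f1 x with
      | some s => some s
      | none => runMapping f2 x) from rfl]
  rw [runMapping_eq_posOf (validLabels_counts hv1) x, runMapping_eq_posOf (validLabels_counts hv2) x]
  by_cases hm1 : (VLabel.openv x) ∈ f1
  · have hmc1 : (VLabel.closev x) ∈ f1 := (validLabels_iff_mem hv1 x).1 hm1
    rw [if_pos hm1, if_pos (ho2.2 (Or.inl hm1))]
    simp only []
    rw [ho3 hm1, hc3 hmc1]
  · rw [if_neg hm1]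
    by_cases hm2 : (VLabel.openv x) ∈ f2
    · have hmc2 : (VLabel.closev x) ∈ f2 := (validLabels_iff_mem hv2 x).1 hm2
      rw [if_pos hm2, if_pos (ho2.2 (Or.inr hm2))]
      simp only []
      rw [ho4 hm2, hc4 hmc2]
    · rw [if_neg hm2, if_neg (fun hm => (ho2.1 hm).elim hm1 hm2)]

lemma invPre_compatible {f f1 f2 : List (VLabel Sig)} (hinv : InvPre f f1 f2)
    (hv1 : ValidLabels f1) (hv2 : ValidLabels f2) :
    Compatible (runMapping f1) (runMapping f2) := by
  intro x s1 s2 h1 h2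
  obtain ⟨ho1, ho2, ho3, ho4⟩ := (hinv x).1
  obtain ⟨hc1, hc2, hc3, hc4⟩ := (hinv x).2
  rw [runMapping_eq_posOf (validLabels_counts hv1) x] at h1
  rw [runMapping_eq_posOf (validLabels_counts hv2) x] at h2
  by_cases hm1 : (VLabel.openv x) ∈ f1
  · by_cases hm2 : (VLabel.openv x) ∈ f2
    · rw [if_pos hm1] at h1; rw [if_pos hm2] at h2
      have hmc1 : (VLabel.closev x) ∈ f1 := (validLabels_iff_mem hv1 x).1 hm1
      have hmc2 : (VLabel.closev x) ∈ f2 := (validLabels_iff_mem hv2 x).1 hm2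
      have e1 : posOf f1 (VLabel.openv x) = posOf f2 (VLabel.openv x) := by
        rw [ho3 hm1, ho4 hm2]
      have e2 : posOf f1 (VLabel.closev x) = posOf f2 (VLabel.closev x) := by
        rw [hc3 hmc1, hc4 hmc2]
      have h1' := Option.some.inj h1
      have h2' := Option.some.inj h2
      rw [← h1', ← h2', e1, e2]
    · rw [if_neg hm2] at h2; exact absurd h2 (by simp)
  · rw [if_neg hm1] at h1; exact absurd h1 (by simp)

/-- Full soundness: any accepting run of the product decomposes. -/
lemma join_sound {A1 A2 : VA Sig} (hs1 : A1.Sequential) (hs2 : A2.Sequential)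
    (hsf1 : SemiFunctionalForSet A1 (Xv A1 A2)) (hsf2 : SemiFunctionalForSet A2 (Xv A1 A2))
    {ls : List (VLabel Sig)} (hacc : AcceptsWith (joinVA A1 A2) ls) :
    ∃ ls1 ls2, AcceptsWith A1 ls1 ∧ AcceptsWith A2 ls2 ∧
      readWord ls = readWord ls1 ∧ readWord ls = readWord ls2 ∧
      ValidLabels ls1 ∧ ValidLabels ls2 ∧ InvPre ls ls1 ls2 := by
  obtain ⟨qf, hpath, hqf⟩ := hacc
  obtain ⟨ls1, ls2, hR⟩ := path_to_R hpath hqf false A1.q0 A2.q0 A1.q0 rfl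
  obtain ⟨f1, hf1, hp1⟩ := R_comp1 hR
  obtain ⟨f2, hf2, hp2⟩ := R_comp2 hR
  have hacc1 : AcceptsWith A1 ls1 := ⟨f1, hp1, hf1⟩
  have hacc2 : AcceptsWith A2 ls2 := ⟨f2, hp2, hf2⟩
  have hv1 : ValidLabels ls1 := hs1 _ hacc1
  have hv2 : ValidLabels ls2 := hs2 _ hacc2
  obtain ⟨hr1, hr2, _, _⟩ := R_read hR
  have hinv := master hs1 hs2 hsf1 hsf2 hR [] [] [] [] []
    (VA.PathFrom.nil _) (VA.PathFrom.nil _) rfl (VA.PathFrom.nil _) (VA.PathFrom.nil _)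
    (by simp) (by simpa using hv1) (by simpa using hv2) rfl rfl invPre_nil
  simp only [List.nil_append] at hinv
  exact ⟨ls1, ls2, hacc1, hacc2, hr1, hr2, hv1, hv2, hinv⟩

/-- Sequentiality of the product. -/
lemma join_sequential {A1 A2 : VA Sig} (hs1 : A1.Sequential) (hs2 : A2.Sequential)
    (hsf1 : SemiFunctionalForSet A1 (Xv A1 A2)) (hsf2 : SemiFunctionalForSet A2 (Xv A1 A2)) :
    (joinVA A1 A2).Sequential := by
  intro ls hacc
  obtain ⟨ls1, ls2, _, _, _, _, hv1, hv2, hinv⟩ := join_sound hs1 hs2 hsf1 hsf2 hacc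
  exact invPre_validLabels hinv hv1 hv2
/-! ### Helpers for the completeness construction -/

lemma pathFrom_split {A : VA Sig} {p r : ℕ} {l1 l2 : List (VLabel Sig)}
    (h : A.PathFrom p (l1 ++ l2) r) : ∃ q, A.PathFrom p l1 q ∧ A.PathFrom q l2 r := by
  induction l1 generalizing p with
  | nil => exact ⟨p, VA.PathFrom.nil p, by simpa using h⟩
  | cons a tl ih =>
    cases h with
    | cons h1 htail =>
      obtain ⟨q, hq1, hq2⟩ := ih htail
      exact ⟨q, VA.PathFrom.cons h1 hq1, hq2⟩

lemma pathFrom_cons_inv {A : VA Sig} {p r : ℕ} {l : VLabel Sig} {t : List (VLabel Sig)}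
    (h : A.PathFrom p (l :: t) r) : ∃ m, (p, l, m) ∈ A.δ ∧ A.PathFrom m t r := by
  cases h with
  | cons h1 htail => exact ⟨_, h1, htail⟩

lemma readWord_eq_nil_no_letter {l : List (VLabel Sig)} (h : readWord l = []) :
    ∀ σ, VLabel.letter σ ∉ l := by
  intro σ hm
  induction l with
  | nil => simp at hm
  | cons a tl ih =>
    cases a with
    | letter τ => simp [readWord] at h
    | eps => exact ih (by simpa [readWord] using h) (by
        rcases List.mem_cons.1 hm with h' | h'
        · exact absurd h' (by simp)
        · exact h')
    | openv x => exact ih (by simpa [readWord] using h) (by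
        rcases List.mem_cons.1 hm with h' | h'
        · exact absurd h' (by simp)
        · exact h')
    | closev x => exact ih (by simpa [readWord] using h) (by
        rcases List.mem_cons.1 hm with h' | h'
        · exact absurd h' (by simp)
        · exact h')

lemma readWord_split {ls : List (VLabel Sig)} {σ : Sig} {w : List Sig}
    (h : readWord ls = σ :: w) :
    ∃ u t, ls = u ++ VLabel.letter σ :: t ∧ (∀ τ, VLabel.letter τ ∉ u) ∧ readWord t = w := by
  induction ls with
  | nil => simp [readWord] at h
  | cons a tl ih =>
    cases a with
    | letter τ =>
      have h' : τ :: readWord tl = σ :: w := h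
      obtain ⟨h1, h2⟩ := List.cons.inj h'
      subst h1
      exact ⟨[], tl, by simp, by simp, h2⟩
    | eps =>
      obtain ⟨u, t, h1, h2, h3⟩ := ih h
      refine ⟨VLabel.eps :: u, t, by simp [h1], ?_, h3⟩
      intro τ hm
      rcases List.mem_cons.1 hm with h' | h'
      · exact nomatch h'
      · exact h2 τ h'
    | openv x =>
      obtain ⟨u, t, h1, h2, h3⟩ := ih h
      refine ⟨VLabel.openv x :: u, t, by simp [h1], ?_, h3⟩
      intro τ hm
      rcases List.mem_cons.1 hm with h' | h'
      · exact nomatch h'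
      · exact h2 τ h'
    | closev x =>
      obtain ⟨u, t, h1, h2, h3⟩ := ih h
      refine ⟨VLabel.closev x :: u, t, by simp [h1], ?_, h3⟩
      intro τ hm
      rcases List.mem_cons.1 hm with h' | h'
      · exact nomatch h'
      · exact h2 τ h'

/-- chain of comp1 moves in phase 1 -/
lemma R_c1_many {A1 A2 : VA Sig} {q2 a1 : ℕ} {u : List (VLabel Sig)} :
    ∀ {q1 q1' : ℕ}, A1.PathFrom q1 u q1' → (∀ l ∈ u, C1ok A1 A2 l q2) →
    ∀ {ls ls1 ls2 : List (VLabel Sig)}, R A1 A2 false q1' q2 a1 ls ls1 ls2 →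
    R A1 A2 false q1 q2 a1 (u ++ ls) (u ++ ls1) ls2 := by
  induction u with
  | nil => intro q1 q1' hp hg ls ls1 ls2 h; cases hp; simpa using h
  | cons a tl ih =>
    intro q1 q1' hp hg ls ls1 ls2 h
    obtain ⟨m, hm, htail⟩ := pathFrom_cons_inv hp
    have := ih htail (fun l hl => hg l (List.mem_cons.2 (Or.inr hl))) h
    exact R.c1 hm (hg a List.mem_cons_self) this

/-- chain of comp2 moves in phase 2, each either emitting or silent -/
lemma R_c2_many {A1 A2 : VA Sig} {q1 a1 : ℕ} {v : List (VLabel Sig)} :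
    ∀ {q2 q2' : ℕ}, A2.PathFrom q2 v q2' →
    (∀ l ∈ v, C2ok A1 A2 l q1 ∨ C2s A1 A2 l q1 a1) →
    ∀ {ls ls1 ls2 : List (VLabel Sig)}, R A1 A2 true q1 q2' a1 ls ls1 ls2 →
    ∃ w, R A1 A2 true q1 q2 a1 (w ++ ls) ls1 (v ++ ls2) := by
  induction v with
  | nil => intro q2 q2' hp hg ls ls1 ls2 h; cases hp; exact ⟨[], by simpa using h⟩
  | cons a tl ih =>
    intro q2 q2' hp hg ls ls1 ls2 h
    obtain ⟨m, hm, htail⟩ := pathFrom_cons_inv hp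
    obtain ⟨w, hw⟩ := ih htail (fun l hl => hg l (List.mem_cons.2 (Or.inr hl))) h
    rcases hg a List.mem_cons_self with hok | hok
    · exact ⟨a :: w, R.c2 hm hok hw⟩
    · exact ⟨VLabel.eps :: w, R.c2s hm hok hw⟩
/-! ### gate derivation helpers -/

lemma posOf_pos {l : List (VLabel Sig)} {o : VLabel Sig} : 1 ≤ posOf l o := by
  unfold posOf; omega

lemma validLabels_count_op {ls : List (VLabel Sig)} (h : ValidLabels ls) {o : VLabel Sig}
    (hop : IsOp o) : ls.count o ≤ 1 := by
  obtain ⟨x, ho | ho⟩ := hop <;> subst ho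
  · exact (h x).1
  · exact (h x).2.1

/-- an op occurring in the current suffix of run 1 cannot have occurred in the
(letter-terminated) prefix of run 2 -/
lemma not_mem_pre2_helper {pre1 ls1 pre2 ls2 : List (VLabel Sig)} {o : VLabel Sig}
    (hc1 : (pre1 ++ ls1).count o ≤ 1)
    (hb2 : o ∈ pre2 → posOf pre2 o ≤ nLet pre2)
    (hn : nLet pre1 = nLet pre2)
    (hsy : o ∈ pre2 ++ ls2 → posOf (pre1 ++ ls1) o = posOf (pre2 ++ ls2) o)
    (ho1 : o ∈ ls1) : o ∉ pre2 := by
  intro hm2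
  have hnp1 : o ∉ pre1 := fun hm => count_le_one_not_both hc1 hm ho1
  have e1 : posOf (pre1 ++ ls1) o = nLet pre1 + posOf ls1 o := posOf_append_right _ hnp1
  have e2 : posOf (pre2 ++ ls2) o = posOf pre2 o := posOf_append_left _ hm2
  have h3 := hsy (List.mem_append.2 (Or.inl hm2))
  have h4 := hb2 hm2
  have h5 : 1 ≤ posOf ls1 o := posOf_pos
  omega

/-- an op occurring in comp2's current block must occur in comp1's current block -/
lemma comp2_block_helper {pre1 ls1 pre2 u2 rest2 : List (VLabel Sig)} {o : VLabel Sig}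
    (hb1 : o ∈ pre1 → posOf pre1 o ≤ nLet pre1)
    (hc2 : (pre2 ++ (u2 ++ rest2)).count o ≤ 1)
    (hn : nLet pre1 = nLet pre2)
    (hu2 : ∀ τ, VLabel.letter τ ∉ u2) (ho2 : o ∈ u2)
    (hsy : posOf (pre1 ++ ls1) o = posOf (pre2 ++ (u2 ++ rest2)) o)
    (hof1 : o ∈ pre1 ++ ls1) :
    o ∉ pre1 ∧ o ∈ ls1 ∧ posOf ls1 o = 1 := by
  have hnp2 : o ∉ pre2 := fun hm =>
    count_le_one_not_both hc2 hm (List.mem_append.2 (Or.inl ho2))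
  have e2 : posOf (pre2 ++ (u2 ++ rest2)) o = nLet pre2 + posOf (u2 ++ rest2) o :=
    posOf_append_right _ hnp2
  have e3 : posOf (u2 ++ rest2) o = posOf u2 o := posOf_append_left _ ho2
  have e4 : posOf u2 o = 1 := posOf_eq_one_of_no_letter _ (nLet_eq_zero_of_no_letter hu2)
  have hnp1 : o ∉ pre1 := by
    intro hm
    have e5 : posOf (pre1 ++ ls1) o = posOf pre1 o := posOf_append_left _ hm
    have h6 := hb1 hm
    omega
  have hmem1 : o ∈ ls1 := by
    rcases List.mem_append.1 hof1 with hm | hm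
    · exact absurd hm hnp1
    · exact hm
  have e6 : posOf (pre1 ++ ls1) o = nLet pre1 + posOf ls1 o := posOf_append_right _ hnp1
  exact ⟨hnp1, hmem1, by omega⟩

lemma mem_first_block {u1 t1 : List (VLabel Sig)} {σ : Sig} {o : VLabel Sig} (hop : IsOp o)
    (hu1 : ∀ τ, VLabel.letter τ ∉ u1)
    (hmem : o ∈ u1 ++ VLabel.letter σ :: t1)
    (hpos : posOf (u1 ++ VLabel.letter σ :: t1) o = 1) : o ∈ u1 := by
  by_contra hno
  have e1 : posOf (u1 ++ VLabel.letter σ :: t1) o = nLet u1 + posOf (VLabel.letter σ :: t1) o :=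
    posOf_append_right _ hno
  have hne : VLabel.letter σ ≠ o := by
    obtain ⟨x, ho | ho⟩ := hop <;> subst ho <;> simp
  have e2 : posOf (VLabel.letter σ :: t1) o = 1 + posOf t1 o := by
    rw [posOf_cons_ne _ hne]; simp [isLetterL]
  have h3 : 1 ≤ posOf t1 o := posOf_pos
  omega

/-- prefix bound is maintained when appending a letter-free block and a letter -/
lemma hb_extend {pre u : List (VLabel Sig)} {lσ : VLabel Sig}
    (hσ : ∃ σ, lσ = VLabel.letter σ)
    (hu : ∀ τ, VLabel.letter τ ∉ u)
    (hb : ∀ o : VLabel Sig, IsOp o → o ∈ pre → posOf pre o ≤ nLet pre) :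
    ∀ o : VLabel Sig, IsOp o → o ∈ (pre ++ u) ++ [lσ] → posOf ((pre ++ u) ++ [lσ]) o ≤
      nLet ((pre ++ u) ++ [lσ]) := by
  intro o hop hm
  obtain ⟨σ, rfl⟩ := hσ
  have hone : nLet [(VLabel.letter σ : VLabel Sig)] = 1 := by
    simp [nLet, List.countP_cons, isLetterL]
  have hnu : nLet u = 0 := nLet_eq_zero_of_no_letter hu
  have hnlet : nLet ((pre ++ u) ++ [VLabel.letter σ]) = nLet pre + 1 := by
    simp [hone, hnu]
  have hne : o ≠ VLabel.letter σ := by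
    obtain ⟨x, ho | ho⟩ := hop <;> subst ho <;> simp
  have hm' : o ∈ pre ++ u := by
    rcases List.mem_append.1 hm with h' | h'
    · exact h'
    · exact absurd (List.mem_singleton.1 h') hne
  rw [posOf_append_left _ hm', hnlet]
  rcases List.mem_append.1 hm' with h' | h'
  · rw [posOf_append_left _ h']
    have := hb o hop h'
    omega
  · by_cases hp : o ∈ pre
    · rw [posOf_append_left _ hp]
      have := hb o hop hp
      omega
    · rw [posOf_append_right _ hp]
      have h2 : posOf u o ≤ 1 + nLet u := posOf_le
      omega
/-! ### gates for the constructed run -/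

lemma gates_phase1 {A1 A2 : VA Sig} (hs2 : A2.Sequential)
    (hsf2 : SemiFunctionalForSet A2 (Xv A1 A2))
    {pre1 ls1 pre2 ls2 u1 : List (VLabel Sig)} {q2 f2 : ℕ}
    (hpre2 : A2.PathFrom A2.q0 pre2 q2) (hp2 : A2.PathFrom q2 ls2 f2) (hf2 : f2 ∈ A2.F)
    (hv1c : ∀ o : VLabel Sig, IsOp o → (pre1 ++ ls1).count o ≤ 1)
    (hb2 : ∀ o : VLabel Sig, IsOp o → o ∈ pre2 → posOf pre2 o ≤ nLet pre2)
    (hn : nLet pre1 = nLet pre2)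
    (hsync : ∀ x ∈ Xv A1 A2, ∀ o : VLabel Sig, o = VLabel.openv x ∨ o = VLabel.closev x →
      o ∈ pre1 ++ ls1 → o ∈ pre2 ++ ls2 → posOf (pre1 ++ ls1) o = posOf (pre2 ++ ls2) o)
    (hu1 : ∀ τ, VLabel.letter τ ∉ u1) (hsub : ∀ l ∈ u1, l ∈ ls1) :
    ∀ l ∈ u1, C1ok A1 A2 l q2 := by
  intro l hl
  have hpr2 : PrefixRun A2 pre2 q2 := ⟨hpre2, ls2, f2, hp2, hf2⟩
  cases l with
  | letter τ => exact absurd hl (hu1 τ)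
  | eps =>
    exact ⟨eps_ne_letter, (fun x he => by cases he), (fun x he => by cases he)⟩
  | openv x =>
    refine ⟨by simp, ?_, fun x' he => nomatch he⟩
    intro x' he hXv
    have hx : x' = x := (VLabel.openv.inj he).symm
    subst hx
    apply not_opensAt hs2 (hsf2 x' hXv) hpr2
    exact not_mem_pre2_helper (hv1c _ ⟨x', Or.inl rfl⟩) (hb2 _ ⟨x', Or.inl rfl⟩) hn
      (fun hm2 => hsync x' hXv _ (Or.inl rfl)
        (List.mem_append.2 (Or.inr (hsub _ hl))) hm2) (hsub _ hl)
  | closev x =>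
    refine ⟨by simp, (fun x' he => by cases he), ?_⟩
    intro x' he hXv
    have hx : x' = x := (VLabel.closev.inj he).symm
    subst hx
    apply not_closesAt hs2 (hsf2 x' hXv) hpr2
    exact not_mem_pre2_helper (hv1c _ ⟨x', Or.inr rfl⟩) (hb2 _ ⟨x', Or.inr rfl⟩) hn
      (fun hm2 => hsync x' hXv _ (Or.inr rfl)
        (List.mem_append.2 (Or.inr (hsub _ hl))) hm2) (hsub _ hl)

lemma gates_phase2 {A1 A2 : VA Sig} (hs1 : A1.Sequential)
    (hsf1 : SemiFunctionalForSet A1 (Xv A1 A2))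
    {pre1 u1 rest1 pre2 ls2 u2 rest2 : List (VLabel Sig)} {q1 q1' f1 : ℕ}
    (hpre1 : A1.PathFrom A1.q0 pre1 q1)
    (hbp : A1.PathFrom q1 u1 q1')
    (hrp : A1.PathFrom q1' rest1 f1) (hf1 : f1 ∈ A1.F)
    (hu1 : ∀ τ, VLabel.letter τ ∉ u1) (hu2 : ∀ τ, VLabel.letter τ ∉ u2)
    (hls2 : ls2 = u2 ++ rest2)
    (hv2c : ∀ o : VLabel Sig, IsOp o → (pre2 ++ ls2).count o ≤ 1)
    (hn : nLet pre1 = nLet pre2)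
    (hb1 : ∀ o : VLabel Sig, IsOp o → o ∈ pre1 → posOf pre1 o ≤ nLet pre1)
    (hsync : ∀ x ∈ Xv A1 A2, ∀ o : VLabel Sig, o = VLabel.openv x ∨ o = VLabel.closev x →
      o ∈ pre1 ++ (u1 ++ rest1) → o ∈ pre2 ++ ls2 →
      posOf (pre1 ++ (u1 ++ rest1)) o = posOf (pre2 ++ ls2) o)
    (hfb : ∀ o : VLabel Sig, IsOp o → o ∈ u1 ++ rest1 → posOf (u1 ++ rest1) o = 1 → o ∈ u1) :
    ∀ l ∈ u2, C2ok A1 A2 l q1' ∨ C2s A1 A2 l q1' q1 := by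
  intro l hl
  have hpr1 : PrefixRun A1 pre1 q1 := ⟨hpre1, u1 ++ rest1, f1, pathFrom_append hbp hrp, hf1⟩
  have hpr1' : PrefixRun A1 (pre1 ++ u1) q1' :=
    ⟨pathFrom_append hpre1 hbp, rest1, f1, hrp, hf1⟩
  have hmemext : ∀ o : VLabel Sig, o ∈ pre1 ++ u1 → o ∈ pre1 ++ (u1 ++ rest1) := by
    intro o hm
    rcases List.mem_append.1 hm with h' | h'
    · exact List.mem_append.2 (Or.inl h')
    · exact List.mem_append.2 (Or.inr (List.mem_append.2 (Or.inl h')))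
  cases l with
  | letter τ => exact absurd hl (hu2 τ)
  | eps =>
    exact Or.inl ⟨eps_ne_letter, (fun x he => by cases he),
      (fun x he => by cases he)⟩
  | openv x =>
    by_cases hXv : x ∈ Xv A1 A2
    · by_cases hmem : (VLabel.openv x) ∈ pre1 ++ (u1 ++ rest1)
      · -- comp1 uses x: silent
        have hmem2 : (VLabel.openv x) ∈ pre2 ++ ls2 :=
          List.mem_append.2 (Or.inr (hls2 ▸ List.mem_append.2 (Or.inl hl)))
        have hsy := hsync x hXv _ (Or.inl rfl) hmem hmem2
        have hble := comp2_block_helper (o := VLabel.openv x) (hb1 _ ⟨x, Or.inl rfl⟩)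
          (by rw [← hls2]; exact hv2c _ ⟨x, Or.inl rfl⟩) hn hu2 hl
          (by rw [← hls2]; exact hsy) hmem
        obtain ⟨hnp1, hmem1, hpos1⟩ := hble
        have hou1 : (VLabel.openv x) ∈ u1 := hfb _ ⟨x, Or.inl rfl⟩ hmem1 hpos1
        refine Or.inr (Or.inl ⟨x, rfl, hXv, ?_, ?_⟩)
        · exact not_opensAt hs1 (hsf1 x hXv) hpr1 hnp1
        · exact ⟨pre1 ++ u1, hpr1', List.mem_append.2 (Or.inr hou1)⟩
      · -- comp1 never uses x: emit
        refine Or.inl ⟨by simp, ?_, fun x' he => nomatch he⟩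
        intro x' he hXv'
        have hx : x' = x := (VLabel.openv.inj he).symm
        subst hx
        apply not_opensAt hs1 (hsf1 x' hXv') hpr1'
        exact fun hm => hmem (hmemext _ hm)
    · refine Or.inl ⟨by simp, ?_, fun x' he => nomatch he⟩
      intro x' he hXv'
      have hx : x' = x := (VLabel.openv.inj he).symm
      subst hx
      exact absurd hXv' hXv
  | closev x =>
    by_cases hXv : x ∈ Xv A1 A2
    · by_cases hmem : (VLabel.closev x) ∈ pre1 ++ (u1 ++ rest1)
      · have hmem2 : (VLabel.closev x) ∈ pre2 ++ ls2 :=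
          List.mem_append.2 (Or.inr (hls2 ▸ List.mem_append.2 (Or.inl hl)))
        have hsy := hsync x hXv _ (Or.inr rfl) hmem hmem2
        have hble := comp2_block_helper (o := VLabel.closev x) (hb1 _ ⟨x, Or.inr rfl⟩)
          (by rw [← hls2]; exact hv2c _ ⟨x, Or.inr rfl⟩) hn hu2 hl
          (by rw [← hls2]; exact hsy) hmem
        obtain ⟨hnp1, hmem1, hpos1⟩ := hble
        have hou1 : (VLabel.closev x) ∈ u1 := hfb _ ⟨x, Or.inr rfl⟩ hmem1 hpos1
        refine Or.inr (Or.inr ⟨x, rfl, hXv, ?_, ?_⟩)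
        · exact not_closesAt hs1 (hsf1 x hXv) hpr1 hnp1
        · exact ⟨pre1 ++ u1, hpr1', List.mem_append.2 (Or.inr hou1)⟩
      · refine Or.inl ⟨by simp, (fun x' he => by cases he), ?_⟩
        intro x' he hXv'
        have hx : x' = x := (VLabel.closev.inj he).symm
        subst hx
        apply not_closesAt hs1 (hsf1 x' hXv') hpr1'
        exact fun hm => hmem (hmemext _ hm)
    · refine Or.inl ⟨by simp, (fun x' he => by cases he), ?_⟩
      intro x' he hXv'
      have hx : x' = x := (VLabel.closev.inj he).symm
      subst hx
      exact absurd hXv' hXv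
/-! ### Completeness: constructing the product run -/

lemma build {A1 A2 : VA Sig} (hs1 : A1.Sequential) (hs2 : A2.Sequential)
    (hsf1 : SemiFunctionalForSet A1 (Xv A1 A2)) (hsf2 : SemiFunctionalForSet A2 (Xv A1 A2)) :
    ∀ (d : List Sig) (q1 q2 f1 f2 : ℕ) (ls1 ls2 pre1 pre2 : List (VLabel Sig)),
      A1.PathFrom q1 ls1 f1 → f1 ∈ A1.F → A2.PathFrom q2 ls2 f2 → f2 ∈ A2.F →
      A1.PathFrom A1.q0 pre1 q1 → A2.PathFrom A2.q0 pre2 q2 →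
      readWord ls1 = d → readWord ls2 = d →
      ValidLabels (pre1 ++ ls1) → ValidLabels (pre2 ++ ls2) →
      nLet pre1 = nLet pre2 → q1 ∈ statesOf A1 →
      (∀ o : VLabel Sig, IsOp o → o ∈ pre1 → posOf pre1 o ≤ nLet pre1) →
      (∀ o : VLabel Sig, IsOp o → o ∈ pre2 → posOf pre2 o ≤ nLet pre2) →
      (∀ x ∈ Xv A1 A2, ∀ o : VLabel Sig, o = VLabel.openv x ∨ o = VLabel.closev x →
        o ∈ pre1 ++ ls1 → o ∈ pre2 ++ ls2 → posOf (pre1 ++ ls1) o = posOf (pre2 ++ ls2) o) →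
      ∃ ls, R A1 A2 false q1 q2 q1 ls ls1 ls2 := by
  intro d
  induction d with
  | nil =>
    intro q1 q2 f1 f2 ls1 ls2 pre1 pre2 hp1 hf1 hp2 hf2 hpre1 hpre2 hd1 hd2 hv1 hv2 hn hq1s
      hb1 hb2 hsync
    have hu1 : ∀ τ, VLabel.letter τ ∉ ls1 := readWord_eq_nil_no_letter hd1
    have hu2 : ∀ τ, VLabel.letter τ ∉ ls2 := readWord_eq_nil_no_letter hd2
    have hg1 : ∀ l ∈ ls1, C1ok A1 A2 l q2 :=
      gates_phase1 hs2 hsf2 hpre2 hp2 hf2 (fun o hop => validLabels_count_op hv1 hop)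
        hb2 hn hsync hu1 (fun l hl => hl)
    have hg2 : ∀ l ∈ ls2, C2ok A1 A2 l f1 ∨ C2s A1 A2 l f1 q1 := by
      have := gates_phase2 hs1 hsf1 hpre1 hp1 (VA.PathFrom.nil f1) hf1 hu1 hu2
        (show ls2 = ls2 ++ [] by simp) (fun o hop => validLabels_count_op hv2 hop) hn hb1
        (by simpa using hsync)
        (fun o hop hm _ => by simpa using hm)
      simpa using this
    obtain ⟨w, hw⟩ := R_c2_many hp2 hg2 (R.done hf1 hf2 hq1s)
    rw [List.append_nil, List.append_nil] at hw
    have hsw := R.sw hw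
    have h0 := R_c1_many hp1 hg1 hsw
    rw [List.append_nil] at h0
    exact ⟨ls1 ++ VLabel.eps :: w, h0⟩
  | cons σ dt ih =>
    intro q1 q2 f1 f2 ls1 ls2 pre1 pre2 hp1 hf1 hp2 hf2 hpre1 hpre2 hd1 hd2 hv1 hv2 hn hq1s
      hb1 hb2 hsync
    obtain ⟨u1, t1, he1, hu1, hw1⟩ := readWord_split hd1
    obtain ⟨u2, t2, he2, hu2, hw2⟩ := readWord_split hd2
    subst he1; subst he2
    obtain ⟨q1', hbp1, hrest1⟩ := pathFrom_split hp1
    obtain ⟨p1, ht1, htp1⟩ := pathFrom_cons_inv hrest1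
    obtain ⟨q2', hbp2, hrest2⟩ := pathFrom_split hp2
    obtain ⟨p2, ht2, htp2⟩ := pathFrom_cons_inv hrest2
    have heq1 : pre1 ++ (u1 ++ VLabel.letter σ :: t1) =
        ((pre1 ++ u1) ++ [VLabel.letter σ]) ++ t1 := by simp
    have heq2 : pre2 ++ (u2 ++ VLabel.letter σ :: t2) =
        ((pre2 ++ u2) ++ [VLabel.letter σ]) ++ t2 := by simp
    have hnu1 : nLet u1 = 0 := nLet_eq_zero_of_no_letter hu1
    have hnu2 : nLet u2 = 0 := nLet_eq_zero_of_no_letter hu2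
    have hone : nLet [(VLabel.letter σ : VLabel Sig)] = 1 := by
      simp [nLet, List.countP_cons, isLetterL]
    -- the recursive call
    have hih := ih p1 p2 f1 f2 t1 t2 ((pre1 ++ u1) ++ [VLabel.letter σ])
      ((pre2 ++ u2) ++ [VLabel.letter σ]) htp1 hf1 htp2 hf2
      (pathFrom_append (pathFrom_append hpre1 hbp1)
        (VA.PathFrom.cons ht1 (VA.PathFrom.nil p1)))
      (pathFrom_append (pathFrom_append hpre2 hbp2)
        (VA.PathFrom.cons ht2 (VA.PathFrom.nil p2)))
      hw1 hw2 (heq1 ▸ hv1) (heq2 ▸ hv2)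
      (by simp [hnu1, hnu2, hone]; omega)
      (tgt_states ht1)
      (hb_extend ⟨σ, rfl⟩ hu1 hb1) (hb_extend ⟨σ, rfl⟩ hu2 hb2)
      (by
        intro x hx o ho hm1 hm2
        rw [← heq1] at hm1 ⊢
        rw [← heq2] at hm2 ⊢
        exact hsync x hx o ho hm1 hm2)
    obtain ⟨ls', hR'⟩ := hih
    -- assemble the current block
    have hlt : R A1 A2 true q1' q2' q1 (VLabel.letter σ :: ls') (VLabel.letter σ :: t1)
        (VLabel.letter σ :: t2) := R.lt ht1 ht2 hR'
    have hg2 : ∀ l ∈ u2, C2ok A1 A2 l q1' ∨ C2s A1 A2 l q1' q1 :=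
      gates_phase2 hs1 hsf1 hpre1 hbp1 hrest1 hf1 hu1 hu2 rfl
        (fun o hop => validLabels_count_op hv2 hop) hn hb1 hsync
        (fun o hop hm hpos => mem_first_block hop hu1 hm hpos)
    obtain ⟨w, hw⟩ := R_c2_many hbp2 hg2 hlt
    have hsw := R.sw hw
    have hg1 : ∀ l ∈ u1, C1ok A1 A2 l q2 :=
      gates_phase1 hs2 hsf2 hpre2 hp2 hf2 (fun o hop => validLabels_count_op hv1 hop)
        hb2 hn hsync hu1 (fun l hl => List.mem_append.2 (Or.inl hl))
    have h0 := R_c1_many hbp1 hg1 hsw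
    exact ⟨u1 ++ VLabel.eps :: (w ++ VLabel.letter σ :: ls'), h0⟩
/-! ### Semi-functionality of the product -/

lemma prefix_decomp {A1 A2 : VA Sig} (hs1 : A1.Sequential) (hs2 : A2.Sequential)
    (hsf1 : SemiFunctionalForSet A1 (Xv A1 A2)) (hsf2 : SemiFunctionalForSet A2 (Xv A1 A2)) :
    ∀ (ls : List (VLabel Sig)) (s : ℕ), (joinVA A1 A2).PathFrom (joinVA A1 A2).q0 ls s →
      (∃ w qf, (joinVA A1 A2).PathFrom s w qf ∧ qf ∈ (joinVA A1 A2).F) →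
      ∃ b q1 q2 a1 ls1 ls2, s = enc b q1 q2 a1 ∧
        A1.PathFrom A1.q0 ls1 q1 ∧ A2.PathFrom A2.q0 ls2 q2 ∧
        (∀ x : ℕ,
          ((VLabel.closev x) ∈ ls → (VLabel.closev x) ∈ ls1 ∨ (VLabel.closev x) ∈ ls2) ∧
          (((VLabel.openv x) ∈ ls1 ∨ (VLabel.openv x) ∈ ls2) → (VLabel.openv x) ∈ ls)) := by
  intro ls
  induction ls using List.reverseRecOn with
  | nil =>
    intro s hpath hco
    cases hpath
    exact ⟨false, A1.q0, A2.q0, A1.q0, [], [], rfl, VA.PathFrom.nil _, VA.PathFrom.nil _,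
      fun x => ⟨by simp, by simp⟩⟩
  | append_singleton l0 a ih =>
    intro s hpath hco
    obtain ⟨mid, hmid, hmem⟩ := pathFrom_snoc hpath
    obtain ⟨w, qf, hw, hqf⟩ := hco
    have hcomid : ∃ w' qf', (joinVA A1 A2).PathFrom mid w' qf' ∧ qf' ∈ (joinVA A1 A2).F :=
      ⟨a :: w, qf, VA.PathFrom.cons hmem hw, hqf⟩
    obtain ⟨b, q1, q2, a1, ls1, ls2, hmide, hp1, hp2, hfacts⟩ := ih mid hmid hcomid
    subst hmide
    -- co-reachability of the component states
    obtain ⟨w', qf', hw', hqf'⟩ := hcomid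
    obtain ⟨w1, w2, hRmid⟩ := path_to_R hw' hqf' b q1 q2 a1 rfl
    obtain ⟨g1, hg1, hsuf1⟩ := R_comp1 hRmid
    obtain ⟨g2, hg2, hsuf2⟩ := R_comp2 hRmid
    rcases Finset.mem_union.1 hmem with hm | hm
    · rcases Finset.mem_union.1 hm with hm | hm
      · rcases Finset.mem_union.1 hm with hm | hm
        · rcases Finset.mem_union.1 hm with hm | hm
          · -- dSW
            obtain ⟨z, hz, he⟩ := Finset.mem_image.1 hm
            rw [Prod.ext_iff] at he
            obtain ⟨he1, he2⟩ := he
            rw [Prod.ext_iff] at he2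
            obtain ⟨he2, he3⟩ := he2
            dsimp only at he1 he2 he3
            obtain ⟨hb, h1, h2, h3⟩ := enc_inj he1
            subst hb h1 h2 h3 he2 he3
            refine ⟨true, z.1.1, z.1.2, z.2, ls1, ls2, rfl, hp1, hp2, fun x => ⟨?_, ?_⟩⟩
            · intro hmm
              rcases List.mem_append.1 hmm with h' | h'
              · exact (hfacts x).1 h'
              · exact absurd (List.mem_singleton.1 h') (by simp)
            · intro hmm
              exact List.mem_append.2 (Or.inl ((hfacts x).2 hmm))
          · -- dC1
            obtain ⟨z, hz, he⟩ := Finset.mem_image.1 hm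
            obtain ⟨hzm, hzc⟩ := Finset.mem_filter.1 hz
            rw [Prod.ext_iff] at he
            obtain ⟨he1, he2⟩ := he
            rw [Prod.ext_iff] at he2
            obtain ⟨he2, he3⟩ := he2
            dsimp only at he1 he2 he3
            obtain ⟨hb, h1, h2, h3⟩ := enc_inj he1
            subst hb h1 h2 h3 he2 he3
            obtain ⟨hz1, hz2⟩ := Finset.mem_product.1 hzm
            have hstep : A1.PathFrom A1.q0 (ls1 ++ [z.1.2.1]) z.1.2.2 :=
              pathFrom_append hp1 (VA.PathFrom.cons
                (show (z.1.1, z.1.2.1, z.1.2.2) ∈ A1.δ from hz1) (VA.PathFrom.nil _))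
            refine ⟨false, z.1.2.2, z.2.1, z.2.2, ls1 ++ [z.1.2.1], ls2, rfl, hstep, hp2,
              fun x => ⟨?_, ?_⟩⟩
            · intro hmm
              rcases List.mem_append.1 hmm with h' | h'
              · rcases (hfacts x).1 h' with h'' | h''
                · exact Or.inl (List.mem_append.2 (Or.inl h''))
                · exact Or.inr h''
              · exact Or.inl (List.mem_append.2 (Or.inr h'))
            · intro hmm
              rcases hmm with h' | h'
              · rcases List.mem_append.1 h' with h'' | h''
                · exact List.mem_append.2 (Or.inl ((hfacts x).2 (Or.inl h'')))
                · exact List.mem_append.2 (Or.inr h'')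
              · exact List.mem_append.2 (Or.inl ((hfacts x).2 (Or.inr h')))
        · -- dC2
          obtain ⟨z, hz, he⟩ := Finset.mem_image.1 hm
          obtain ⟨hzm, hzc⟩ := Finset.mem_filter.1 hz
          rw [Prod.ext_iff] at he
          obtain ⟨he1, he2⟩ := he
          rw [Prod.ext_iff] at he2
          obtain ⟨he2, he3⟩ := he2
          dsimp only at he1 he2 he3
          obtain ⟨hb, h1, h2, h3⟩ := enc_inj he1
          subst hb h1 h2 h3 he2 he3
          obtain ⟨hz1, hz2⟩ := Finset.mem_product.1 hzm
          have hstep : A2.PathFrom A2.q0 (ls2 ++ [z.1.2.1]) z.1.2.2 :=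
            pathFrom_append hp2 (VA.PathFrom.cons
              (show (z.1.1, z.1.2.1, z.1.2.2) ∈ A2.δ from hz1) (VA.PathFrom.nil _))
          refine ⟨true, z.2.1, z.1.2.2, z.2.2, ls1, ls2 ++ [z.1.2.1], rfl, hp1, hstep,
            fun x => ⟨?_, ?_⟩⟩
          · intro hmm
            rcases List.mem_append.1 hmm with h' | h'
            · rcases (hfacts x).1 h' with h'' | h''
              · exact Or.inl h''
              · exact Or.inr (List.mem_append.2 (Or.inl h''))
            · exact Or.inr (List.mem_append.2 (Or.inr h'))
          · intro hmm
            rcases hmm with h' | h'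
            · exact List.mem_append.2 (Or.inl ((hfacts x).2 (Or.inl h')))
            · rcases List.mem_append.1 h' with h'' | h''
              · exact List.mem_append.2 (Or.inl ((hfacts x).2 (Or.inr h'')))
              · exact List.mem_append.2 (Or.inr h'')
      · -- dC2s
        obtain ⟨z, hz, he⟩ := Finset.mem_image.1 hm
        obtain ⟨hzm, hzc⟩ := Finset.mem_filter.1 hz
        rw [Prod.ext_iff] at he
        obtain ⟨he1, he2⟩ := he
        rw [Prod.ext_iff] at he2
        obtain ⟨he2, he3⟩ := he2
        dsimp only at he1 he2 he3
        obtain ⟨hb, h1, h2, h3⟩ := enc_inj he1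
        subst hb h1 h2 h3 he2 he3
        obtain ⟨hz1, hz2⟩ := Finset.mem_product.1 hzm
        have hstep : A2.PathFrom A2.q0 (ls2 ++ [z.1.2.1]) z.1.2.2 :=
          pathFrom_append hp2 (VA.PathFrom.cons
            (show (z.1.1, z.1.2.1, z.1.2.2) ∈ A2.δ from hz1) (VA.PathFrom.nil _))
        refine ⟨true, z.2.1, z.1.2.2, z.2.2, ls1, ls2 ++ [z.1.2.1], rfl, hp1, hstep,
          fun x => ⟨?_, ?_⟩⟩
        · intro hmm
          rcases List.mem_append.1 hmm with h' | h'
          · rcases (hfacts x).1 h' with h'' | h''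
            · exact Or.inl h''
            · exact Or.inr (List.mem_append.2 (Or.inl h''))
          · exact absurd (List.mem_singleton.1 h') (by simp)
        · intro hmm
          have hbase : (VLabel.openv x) ∈ ls1 ∨ (VLabel.openv x) ∈ ls2 →
              (VLabel.openv x) ∈ l0 ++ [VLabel.eps] := fun h' =>
            List.mem_append.2 (Or.inl ((hfacts x).2 h'))
          rcases hmm with h' | h'
          · exact hbase (Or.inl h')
          · rcases List.mem_append.1 h' with h'' | h''
            · exact hbase (Or.inr h'')
            · -- the silent op itself: must be an open of x
              have hlab : z.1.2.1 = VLabel.openv x := (List.mem_singleton.1 h'').symm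
              rcases hzc with ⟨y, hy, hXv, hga, hgq⟩ | ⟨y, hy, hXv, hga, hgq⟩
              · have hxy : y = x := by
                  rw [hy] at hlab
                  exact VLabel.openv.inj hlab
                subst hxy
                have hpr1 : PrefixRun A1 ls1 z.2.1 := ⟨hp1, w1, g1, hsuf1, hg1⟩
                by_contra hno
                have hno1 : (VLabel.openv y) ∉ ls1 := fun hh =>
                  hno (hbase (Or.inl hh))
                exact (not_opensAt hs1 (hsf1 y hXv) hpr1 hno1) hgq
              · rw [hy] at hlab
                exact absurd hlab (by simp)
    · -- dLT
      obtain ⟨z, hz, he⟩ := Finset.mem_image.1 hm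
      obtain ⟨hz1, hz2⟩ := Finset.mem_product.1 hz
      obtain ⟨hzm, hσ⟩ := Finset.mem_filter.1 hz1
      obtain ⟨ht1, ht2⟩ := Finset.mem_product.1 hzm
      obtain ⟨σ, hσ1, hσ2⟩ := hσ
      rw [Prod.ext_iff] at he
      obtain ⟨he1, he2⟩ := he
      rw [Prod.ext_iff] at he2
      obtain ⟨he2, he3⟩ := he2
      dsimp only at he1 he2 he3
      obtain ⟨hb, h1, h2, h3⟩ := enc_inj he1
      subst hb h1 h2 h3 he2 he3
      have ht1' : (z.1.1.1, VLabel.letter σ, z.1.1.2.2) ∈ A1.δ := by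
        have h0 : (z.1.1.1, z.1.1.2.1, z.1.1.2.2) ∈ A1.δ := ht1
        rwa [hσ1] at h0
      have ht2' : (z.1.2.1, VLabel.letter σ, z.1.2.2.2) ∈ A2.δ := by
        have h0 : (z.1.2.1, z.1.2.2.1, z.1.2.2.2) ∈ A2.δ := ht2
        rwa [hσ2] at h0
      have hstep1 : A1.PathFrom A1.q0 (ls1 ++ [VLabel.letter σ]) z.1.1.2.2 :=
        pathFrom_append hp1 (VA.PathFrom.cons ht1' (VA.PathFrom.nil _))
      have hstep2 : A2.PathFrom A2.q0 (ls2 ++ [VLabel.letter σ]) z.1.2.2.2 :=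
        pathFrom_append hp2 (VA.PathFrom.cons ht2' (VA.PathFrom.nil _))
      rw [hσ1]
      refine ⟨false, z.1.1.2.2, z.1.2.2.2, z.1.1.2.2, ls1 ++ [VLabel.letter σ],
        ls2 ++ [VLabel.letter σ], rfl, hstep1, hstep2, fun x => ⟨?_, ?_⟩⟩
      · intro hmm
        rcases List.mem_append.1 hmm with h' | h'
        · rcases (hfacts x).1 h' with h'' | h''
          · exact Or.inl (List.mem_append.2 (Or.inl h''))
          · exact Or.inr (List.mem_append.2 (Or.inl h''))
        · exact absurd (List.mem_singleton.1 h') (by simp)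
      · intro hmm
        have : (VLabel.openv x) ∈ ls1 ∨ (VLabel.openv x) ∈ ls2 := by
          rcases hmm with h' | h'
          · rcases List.mem_append.1 h' with h'' | h''
            · exact Or.inl h''
            · exact absurd (List.mem_singleton.1 h'') (by simp)
          · rcases List.mem_append.1 h' with h'' | h''
            · exact Or.inr h''
            · exact absurd (List.mem_singleton.1 h'') (by simp)
        exact List.mem_append.2 (Or.inl ((hfacts x).2 this))

lemma join_semifunc {A1 A2 : VA Sig} (hs1 : A1.Sequential) (hs2 : A2.Sequential)
    (hsf1 : SemiFunctionalForSet A1 (Xv A1 A2)) (hsf2 : SemiFunctionalForSet A2 (Xv A1 A2)) :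
    SemiFunctionalForSet (joinVA A1 A2) (Xv A1 A2) := by
  intro x hXv
  rintro ⟨q, L, L', hPL, hPL', hcls, hnopen⟩
  obtain ⟨hpathL, wL, qfL, hwL, hqfL⟩ := hPL
  obtain ⟨hpathL', wL', qfL', hwL', hqfL'⟩ := hPL'
  obtain ⟨b, q1, q2, a1, l1, l2, hqe, hp1, hp2, hfacts⟩ :=
    prefix_decomp hs1 hs2 hsf1 hsf2 L q hpathL ⟨wL, qfL, hwL, hqfL⟩
  obtain ⟨b', q1', q2', a1', l1', l2', hqe', hp1', hp2', hfacts'⟩ :=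
    prefix_decomp hs1 hs2 hsf1 hsf2 L' q hpathL' ⟨wL', qfL', hwL', hqfL'⟩
  rw [hqe] at hqe'
  obtain ⟨hb, h1, h2, h3⟩ := enc_inj hqe'
  subst hb h1 h2 h3
  -- co-reachability of the component states of q
  rw [hqe] at hwL
  obtain ⟨w1, w2, hR⟩ := path_to_R hwL hqfL b q1 q2 a1 rfl
  obtain ⟨g1, hg1, hsuf1⟩ := R_comp1 hR
  obtain ⟨g2, hg2, hsuf2⟩ := R_comp2 hR
  rcases (hfacts x).1 hcls with hc1 | hc2
  · -- comp1 closed x in L; use semi-functionality of A1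
    have hopen : (VLabel.openv x) ∈ l1' := by
      by_contra hno
      exact hsf1 x hXv ⟨q1, l1, l1', ⟨hp1, w1, g1, hsuf1, hg1⟩,
        ⟨hp1', w1, g1, hsuf1, hg1⟩, hc1, hno⟩
    exact hnopen ((hfacts' x).2 (Or.inl hopen))
  · have hopen : (VLabel.openv x) ∈ l2' := by
      by_contra hno
      exact hsf2 x hXv ⟨q2, l2, l2', ⟨hp2, w2, g2, hsuf2, hg2⟩,
        ⟨hp2', w2, g2, hsuf2, hg2⟩, hc2, hno⟩
    exact hnopen ((hfacts' x).2 (Or.inr hopen))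
/-! ### Semantics of the product -/

lemma join_sem {A1 A2 : VA Sig} (hs1 : A1.Sequential) (hs2 : A2.Sequential)
    (hsf1 : SemiFunctionalForSet A1 (Xv A1 A2)) (hsf2 : SemiFunctionalForSet A2 (Xv A1 A2))
    (d : List Sig) : vaSem (joinVA A1 A2) d = joinSet (vaSem A1 d) (vaSem A2 d) := by
  ext μ
  constructor
  · rintro ⟨ls, hacc, hread, hval, rfl⟩
    obtain ⟨ls1, ls2, hacc1, hacc2, hr1, hr2, hv1, hv2, hinv⟩ :=
      join_sound hs1 hs2 hsf1 hsf2 hacc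
    exact ⟨runMapping ls1, ⟨ls1, hacc1, by rw [← hr1, hread], hv1, rfl⟩,
      runMapping ls2, ⟨ls2, hacc2, by rw [← hr2, hread], hv2, rfl⟩,
      invPre_compatible hinv hv1 hv2, invPre_runMapping hinv hv1 hv2 hval⟩
  · rintro ⟨μ1, ⟨w1, hacc1, hread1, hv1, rfl⟩, μ2, ⟨w2, hacc2, hread2, hv2, rfl⟩, hcompat, rfl⟩
    obtain ⟨f1, hp1, hf1⟩ := hacc1
    obtain ⟨f2, hp2, hf2⟩ := hacc2
    have hsync : ∀ x ∈ Xv A1 A2, ∀ o : VLabel Sig,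
        o = VLabel.openv x ∨ o = VLabel.closev x →
        o ∈ w1 → o ∈ w2 → posOf w1 o = posOf w2 o := by
      intro x hx o ho hm1 hm2
      have key : ∀ hmo1 : (VLabel.openv x) ∈ w1, ∀ hmo2 : (VLabel.openv x) ∈ w2,
          posOf w1 (VLabel.openv x) = posOf w2 (VLabel.openv x) ∧
          posOf w1 (VLabel.closev x) = posOf w2 (VLabel.closev x) := by
        intro hmo1 hmo2
        have e1 : runMapping w1 x = some (posOf w1 (VLabel.openv x), posOf w1 (VLabel.closev x)) := by
          rw [runMapping_eq_posOf (validLabels_counts hv1) x, if_pos hmo1]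
        have e2 : runMapping w2 x = some (posOf w2 (VLabel.openv x), posOf w2 (VLabel.closev x)) := by
          rw [runMapping_eq_posOf (validLabels_counts hv2) x, if_pos hmo2]
        have := hcompat x _ _ e1 e2
        exact ⟨congrArg Prod.fst this, congrArg Prod.snd this⟩
      rcases ho with rfl | rfl
      · exact (key hm1 hm2).1
      · exact (key ((validLabels_iff_mem hv1 x).2 hm1)
          ((validLabels_iff_mem hv2 x).2 hm2)).2
    have hq01 : A1.q0 ∈ statesOf A1 := Finset.mem_insert_self _ _
    have hq02 : A2.q0 ∈ statesOf A2 := Finset.mem_insert_self _ _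
    obtain ⟨ls, hR⟩ := build hs1 hs2 hsf1 hsf2 d A1.q0 A2.q0 f1 f2 w1 w2 [] []
      hp1 hf1 hp2 hf2 (VA.PathFrom.nil _) (VA.PathFrom.nil _) hread1 hread2
      (by simpa using hv1) (by simpa using hv2) rfl hq01
      (fun o _ hm => absurd hm List.not_mem_nil)
      (fun o _ hm => absurd hm List.not_mem_nil)
      (by
        intro x hx o ho hm1 hm2
        simp only [List.nil_append] at hm1 hm2 ⊢
        exact hsync x hx o ho hm1 hm2)
    obtain ⟨qf, hpath, hqf⟩ := R_to_path hR hq01 hq02 hq01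
    have haccJ : AcceptsWith (joinVA A1 A2) ls := ⟨qf, hpath, hqf⟩
    have hreads : readWord ls = d := by rw [(R_read hR).1, hread1]
    have hinv := master hs1 hs2 hsf1 hsf2 hR [] [] [] [] []
      (VA.PathFrom.nil _) (VA.PathFrom.nil _) rfl (VA.PathFrom.nil _) (VA.PathFrom.nil _)
      (by simp) (by simpa using hv1) (by simpa using hv2) rfl rfl invPre_nil
    simp only [List.nil_append] at hinv
    have hval : ValidLabels ls := invPre_validLabels hinv hv1 hv2
    exact ⟨ls, haccJ, hreads, hval, (invPre_runMapping hinv hv1 hv2 hval).symm⟩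

/-! ### Size bound -/

lemma join_size {A1 A2 : VA Sig} :
    vaSize (joinVA A1 A2) ≤ 16 * (vaSize A1 + vaSize A2) ^ 3 + (vaSize A1 + vaSize A2) + 1 := by
  set n := vaSize A1 + vaSize A2 with hn
  set s1 := (statesOf A1).card with hs1
  set s2 := (statesOf A2).card with hs2
  set d1 := A1.δ.card with hd1
  set d2 := A2.δ.card with hd2
  have hb1 : s1 ≤ n := by simp [hn, vaSize]; omega
  have hb2 : s2 ≤ n := by simp [hn, vaSize]; omega
  have hb3 : d1 ≤ n := by simp [hn, vaSize]; omega
  have hb4 : d2 ≤ n := by simp [hn, vaSize]; omega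
  have hF1 : A1.F.card ≤ s1 := Finset.card_le_card (fun f hf => F_states hf)
  have hF2 : A2.F.card ≤ s2 := Finset.card_le_card (fun f hf => F_states hf)
  have hcF : (joinVA A1 A2).F.card ≤ n ^ 3 := by
    calc (joinVA A1 A2).F.card ≤ (((A1.F ×ˢ A2.F) ×ˢ statesOf A1)).card :=
          Finset.card_image_le
      _ = A1.F.card * A2.F.card * s1 := by
          rw [Finset.card_product, Finset.card_product]
      _ ≤ n * n * n := by
          exact Nat.mul_le_mul (Nat.mul_le_mul (hF1.trans hb1) (hF2.trans hb2)) hb1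
      _ = n ^ 3 := by ring
  have hSW : (dSW A1 A2).card ≤ n ^ 3 := by
    calc (dSW A1 A2).card ≤ ((statesOf A1 ×ˢ statesOf A2) ×ˢ statesOf A1).card :=
          Finset.card_image_le
      _ = s1 * s2 * s1 := by rw [Finset.card_product, Finset.card_product]
      _ ≤ n * n * n := Nat.mul_le_mul (Nat.mul_le_mul hb1 hb2) hb1
      _ = n ^ 3 := by ring
  have hC1 : (dC1 A1 A2).card ≤ n ^ 3 := by
    calc (dC1 A1 A2).card
        ≤ ((A1.δ ×ˢ (statesOf A2 ×ˢ statesOf A1)).filter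
            (fun z => C1ok A1 A2 z.1.2.1 z.2.1)).card := Finset.card_image_le
      _ ≤ (A1.δ ×ˢ (statesOf A2 ×ˢ statesOf A1)).card := Finset.card_filter_le _ _
      _ = d1 * (s2 * s1) := by rw [Finset.card_product, Finset.card_product]
      _ ≤ n * (n * n) := Nat.mul_le_mul hb3 (Nat.mul_le_mul hb2 hb1)
      _ = n ^ 3 := by ring
  have hC2 : (dC2 A1 A2).card ≤ n ^ 3 := by
    calc (dC2 A1 A2).card
        ≤ ((A2.δ ×ˢ (statesOf A1 ×ˢ statesOf A1)).filter
            (fun z => C2ok A1 A2 z.1.2.1 z.2.1)).card := Finset.card_image_le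
      _ ≤ (A2.δ ×ˢ (statesOf A1 ×ˢ statesOf A1)).card := Finset.card_filter_le _ _
      _ = d2 * (s1 * s1) := by rw [Finset.card_product, Finset.card_product]
      _ ≤ n * (n * n) := Nat.mul_le_mul hb4 (Nat.mul_le_mul hb1 hb1)
      _ = n ^ 3 := by ring
  have hC2s : (dC2s A1 A2).card ≤ n ^ 3 := by
    calc (dC2s A1 A2).card
        ≤ ((A2.δ ×ˢ (statesOf A1 ×ˢ statesOf A1)).filter
            (fun z => C2s A1 A2 z.1.2.1 z.2.1 z.2.2)).card := Finset.card_image_le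
      _ ≤ (A2.δ ×ˢ (statesOf A1 ×ˢ statesOf A1)).card := Finset.card_filter_le _ _
      _ = d2 * (s1 * s1) := by rw [Finset.card_product, Finset.card_product]
      _ ≤ n * (n * n) := Nat.mul_le_mul hb4 (Nat.mul_le_mul hb1 hb1)
      _ = n ^ 3 := by ring
  have hLT : (dLT A1 A2).card ≤ n ^ 3 := by
    calc (dLT A1 A2).card
        ≤ ((((A1.δ ×ˢ A2.δ).filter
            (fun z => ∃ σ, z.1.2.1 = VLabel.letter σ ∧ z.2.2.1 = VLabel.letter σ))
              ×ˢ statesOf A1)).card := Finset.card_image_le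
      _ = ((A1.δ ×ˢ A2.δ).filter
            (fun z => ∃ σ, z.1.2.1 = VLabel.letter σ ∧ z.2.2.1 = VLabel.letter σ)).card * s1 :=
          Finset.card_product _ _
      _ ≤ (A1.δ ×ˢ A2.δ).card * s1 :=
          Nat.mul_le_mul_right _ (Finset.card_filter_le _ _)
      _ = d1 * d2 * s1 := by rw [Finset.card_product]
      _ ≤ n * n * n := Nat.mul_le_mul (Nat.mul_le_mul hb3 hb4) hb1
      _ = n ^ 3 := by ring
  have hdJ : (joinVA A1 A2).δ.card ≤ 5 * n ^ 3 := by
    have h1 := Finset.card_union_le (dSW A1 A2 ∪ dC1 A1 A2 ∪ dC2 A1 A2 ∪ dC2s A1 A2) (dLT A1 A2)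
    have h2 := Finset.card_union_le (dSW A1 A2 ∪ dC1 A1 A2 ∪ dC2 A1 A2) (dC2s A1 A2)
    have h3 := Finset.card_union_le (dSW A1 A2 ∪ dC1 A1 A2) (dC2 A1 A2)
    have h4 := Finset.card_union_le (dSW A1 A2) (dC1 A1 A2)
    have : (joinVA A1 A2).δ =
        dSW A1 A2 ∪ dC1 A1 A2 ∪ dC2 A1 A2 ∪ dC2s A1 A2 ∪ dLT A1 A2 := rfl
    rw [this]
    omega
  have hstJ : (statesOf (joinVA A1 A2)).card ≤ 1 + n ^ 3 + 10 * n ^ 3 := by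
    have h0 : statesOf (joinVA A1 A2) = insert (joinVA A1 A2).q0
        ((joinVA A1 A2).F ∪ (joinVA A1 A2).δ.image (fun t => t.1)
          ∪ (joinVA A1 A2).δ.image (fun t => t.2.2)) := rfl
    rw [h0]
    have h1 := Finset.card_insert_le (joinVA A1 A2).q0
      ((joinVA A1 A2).F ∪ (joinVA A1 A2).δ.image (fun t => t.1)
        ∪ (joinVA A1 A2).δ.image (fun t => t.2.2))
    have h2 := Finset.card_union_le ((joinVA A1 A2).F ∪ (joinVA A1 A2).δ.image (fun t => t.1))
      ((joinVA A1 A2).δ.image (fun t => (t.2.2 : ℕ)))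
    have h3 := Finset.card_union_le (joinVA A1 A2).F
      ((joinVA A1 A2).δ.image (fun t => (t.1 : ℕ)))
    have h4 : ((joinVA A1 A2).δ.image (fun t => (t.1 : ℕ))).card ≤ 5 * n ^ 3 :=
      le_trans Finset.card_image_le hdJ
    have h5 : ((joinVA A1 A2).δ.image (fun t => (t.2.2 : ℕ))).card ≤ 5 * n ^ 3 :=
      le_trans Finset.card_image_le hdJ
    omega
  have : vaSize (joinVA A1 A2) = (statesOf (joinVA A1 A2)).card + (joinVA A1 A2).δ.card := rfl
  omega
theorem statement5 :
    ∃ p : Polynomial ℕ, ∀ A1 A2 : VA Sig, A1.Sequential → A2.Sequential →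
      SemiFunctionalForSet A1 (varsOf A1 ∩ varsOf A2) →
      SemiFunctionalForSet A2 (varsOf A1 ∩ varsOf A2) →
      ∃ A : VA Sig, A.Sequential ∧ SemiFunctionalForSet A (varsOf A1 ∩ varsOf A2) ∧
        (∀ d : List Sig, vaSem A d = joinSet (vaSem A1 d) (vaSem A2 d)) ∧
        vaSize A ≤ p.eval (vaSize A1 + vaSize A2) := by
  refine ⟨Polynomial.C 16 * Polynomial.X ^ 3 + Polynomial.X + Polynomial.C 1, ?_⟩
  intro A1 A2 hs1 hs2 hsf1 hsf2
  have hsf1' : SemiFunctionalForSet A1 (Xv A1 A2) := hsf1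
  have hsf2' : SemiFunctionalForSet A2 (Xv A1 A2) := hsf2
  refine ⟨joinVA A1 A2, join_sequential hs1 hs2 hsf1' hsf2',
    join_semifunc hs1 hs2 hsf1' hsf2', fun d => join_sem hs1 hs2 hsf1' hsf2' d, ?_⟩
  have hsz := join_size (A1 := A1) (A2 := A2)
  simpa [Polynomial.eval_add, Polynomial.eval_mul, Polynomial.eval_pow] using hsz

end Spanners
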